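/- arXiv:1308.5382 — 9 statements merged into one kernel-verified Lean document; each statement's English description precedes it below -/
import Mathlib

section
/- Let Γ be a finite semigroup with at least two elements and let V be a proper subsemigroup of Γ of the largest possible cardinality among proper subsemigroups. Then the large rank of Γ satisfies r₅(Γ) = |V| + 1. -/
/-- **Howie–Ribeiro.** If `V` is a proper subsemigroup of a finite semigroup `Γ`
(with at least two elements) of the largest possible cardinality among proper
subsemigroups, then the large rank `r₅(Γ)` — the least `k` such that every subset
of `Γ` of cardinality `k` generates `Γ` — equals `|V| + 1`. -/
theorem largeRank_eq_card_largest_proper_subsemigroup_add_one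
    {Γ : Type*} [Semigroup Γ] [Fintype Γ] [Nontrivial Γ]
    (V : Subsemigroup Γ) (hV : V ≠ ⊤)
    (hmax : ∀ W : Subsemigroup Γ, W ≠ ⊤ → (W : Set Γ).ncard ≤ (V : Set Γ).ncard) :
    IsLeast {k : ℕ | ∀ U : Finset Γ, U.card = k → Subsemigroup.closure (U : Set Γ) = ⊤}
      ((V : Set Γ).ncard + 1) := by
  constructor
  · intro U hU
    by_contra h
    have h1 : (U : Set Γ) ⊆ (Subsemigroup.closure (U : Set Γ) : Set Γ) :=
      Subsemigroup.subset_closure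
    have h2 : (U : Set Γ).ncard ≤ (Subsemigroup.closure (U : Set Γ) : Set Γ).ncard :=
      Set.ncard_le_ncard h1 (Set.toFinite _)
    have h3 := hmax _ h
    rw [Set.ncard_coe_finset, hU] at h2
    omega
  · intro k hk
    by_contra h
    push_neg at h
    have hfin := (V : Set Γ).toFinite
    have hk' : k ≤ hfin.toFinset.card := by
      rw [← Set.ncard_eq_toFinset_card]
      omega
    obtain ⟨t, ht, htc⟩ := Finset.exists_subset_card_eq hk'
    have := hk t htc
    have hle : Subsemigroup.closure (t : Set Γ) ≤ V := by
      rw [Subsemigroup.closure_le]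
      intro x hx
      have h2 := ht hx
      rw [Set.Finite.mem_toFinset] at h2
      exact h2
    exact hV (top_le_iff.mp (this ▸ hle))
end

section
/- Let Γ be a finite semigroup and let V be a nonempty proper prime subset of Γ of the smallest possible cardinality among nonempty proper prime subsets. Then the large rank of Γ satisfies r₅(Γ) = |Γ \ V| + 1, i.e., r₅(Γ) = |Γ| − |V| + 1. -/
/-- A nonempty subset `U` of a (multiplicative) semigroup is *prime* if
`a * b ∈ U` implies `a ∈ U` or `b ∈ U`. -/
def IsPrimeSubset {Γ : Type*} [Mul Γ] (U : Set Γ) : Prop :=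
  U.Nonempty ∧ ∀ a b : Γ, a * b ∈ U → a ∈ U ∨ b ∈ U

/-- If `V` is a nonempty proper prime subset of a finite semigroup `Γ` of the smallest
possible cardinality among nonempty proper prime subsets, then the large rank `r₅(Γ)`
— the least `k` such that every subset of `Γ` of cardinality `k` generates `Γ` —
equals `|Γ \ V| + 1`. -/
theorem largeRank_eq_card_compl_smallest_prime_add_one
    {Γ : Type*} [Semigroup Γ] [Fintype Γ]
    (V : Set Γ) (h1 : V.Nonempty) (h2 : V ≠ Set.univ) (hp : IsPrimeSubset V)
    (hmin : ∀ U : Set Γ, U.Nonempty → U ≠ Set.univ → IsPrimeSubset U → V.ncard ≤ U.ncard) :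
    IsLeast {k : ℕ | ∀ U : Finset Γ, U.card = k → Subsemigroup.closure (U : Set Γ) = ⊤}
      (Vᶜ.ncard + 1) := by
  classical
  have hsum : ∀ s : Set Γ, s.ncard + sᶜ.ncard = Fintype.card Γ := by
    intro s
    rw [Set.ncard_add_ncard_compl, Nat.card_eq_fintype_card]
  constructor
  · -- membership: every set of size |Vᶜ|+1 generates
    intro U hU
    by_contra hne
    set T : Subsemigroup Γ := Subsemigroup.closure (U : Set Γ) with hT
    -- complement of T is a nonempty proper prime subset
    have hTne : ((T : Set Γ)ᶜ).Nonempty := by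
      rcases Set.eq_empty_or_nonempty ((T : Set Γ)ᶜ) with h | h
      · exfalso; apply hne
        ext x
        simp only [Subsemigroup.mem_top, iff_true]
        by_contra hx
        exact Set.eq_empty_iff_forall_notMem.mp h x hx
      · exact h
    have hUne : U.Nonempty := by
      rw [← Finset.card_pos, hU]; omega
    obtain ⟨u, hu⟩ := hUne
    have huT : u ∈ T := Subsemigroup.subset_closure (by simpa using hu)
    have hTprop : ((T : Set Γ)ᶜ) ≠ Set.univ := by
      intro h
      have : u ∈ ((T : Set Γ)ᶜ) := h ▸ Set.mem_univ u
      exact this huT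
    have hTprime : IsPrimeSubset ((T : Set Γ)ᶜ) := by
      refine ⟨hTne, fun a b hab => ?_⟩
      by_contra hc
      push_neg at hc
      have ha : a ∈ T := not_not.mp hc.1
      have hb : b ∈ T := not_not.mp hc.2
      exact hab (mul_mem ha hb)
    have hle := hmin _ hTne hTprop hTprime
    -- cardinality contradiction
    have hUsub : (U : Set Γ) ⊆ (T : Set Γ) := Subsemigroup.subset_closure
    have h1' : (U : Set Γ).ncard ≤ (T : Set Γ).ncard :=
      Set.ncard_le_ncard hUsub (Set.toFinite _)
    have h2' : (U : Set Γ).ncard = U.card := by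
      simp [Set.ncard_coe_finset]
    have e1 := hsum V
    have e2 := hsum (T : Set Γ)
    omega
  · -- lower bound
    intro k hk
    by_contra hlt
    push_neg at hlt
    have hk' : k ≤ Vᶜ.ncard := by omega
    have hcard : k ≤ Vᶜ.toFinset.card := by
      rwa [Set.ncard_eq_toFinset_card'] at hk'
    obtain ⟨S, hS, hScard⟩ := Finset.exists_subset_card_eq hcard
    have hgen := hk S hScard
    -- Vᶜ is a subsemigroup
    have hWmul : ∀ {a b : Γ}, a ∈ Vᶜ → b ∈ Vᶜ → a * b ∈ Vᶜ := by
      intro a b ha hb hab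
      rcases hp.2 a b hab with h | h
      · exact ha h
      · exact hb h
    have hSW : Subsemigroup.closure (S : Set Γ) ≤ ⟨Vᶜ, fun ha hb => hWmul ha hb⟩ := by
      apply Subsemigroup.closure_le.mpr
      intro x hx
      have h := hS hx
      simpa using h
    rw [hgen] at hSW
    obtain ⟨v, hv⟩ := h1
    exact (hSW (Subsemigroup.mem_top v) : v ∉ V) hv
end

section
/- For every finite group G and every integer n ≥ 2, the large rank of the Brandt semigroup B(G, n) is r₅(B(G, n)) = (n² − n + 1)·|G| + 2. -/
/-- The Brandt semigroup `B(G, n)` over a group `G`: underlying set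
`([n] × G × [n]) ∪ {0}`, encoded as `Option (Fin n × G × Fin n)` with `none`
playing the role of the zero element `0`. -/
def Brandt (G : Type*) (n : ℕ) : Type _ := Option (Fin n × G × Fin n)

namespace Brandt

/-- The zero element `0` of the Brandt semigroup. -/
def zero {G : Type*} {n : ℕ} : Brandt G n := none

/-- The element `(i, a, j)` of the Brandt semigroup. -/
def elem {G : Type*} {n : ℕ} (i : Fin n) (a : G) (j : Fin n) : Brandt G n := some (i, a, j)

/-- Multiplication: `(i, a, j)(k, b, l) = (i, ab, l)` if `j = k` and `0` otherwise,
with `0` acting as a zero element. -/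
def mul {G : Type*} [Group G] {n : ℕ} : Brandt G n → Brandt G n → Brandt G n
  | none, _ => none
  | some _, none => none
  | some (i, a, j), some (k, b, l) => if j = k then some (i, a * b, l) else none

instance (G : Type*) [Group G] (n : ℕ) : Semigroup (Brandt G n) where
  mul := mul
  mul_assoc x y z := by
    show mul (mul x y) z = mul x (mul y z)
    rcases x with _ | ⟨i, a, j⟩ <;> rcases y with _ | ⟨k, b, l⟩ <;> rcases z with _ | ⟨m, c, p⟩ <;>
      simp only [mul]
    all_goals first
      | rfl
      | (by_cases h1 : j = k <;> by_cases h2 : l = m <;> simp [mul, h1, h2, mul_assoc] <;> rfl)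
      | (by_cases h1 : j = k <;> simp [mul, h1] <;> rfl)
      | (split_ifs <;> simp_all [mul, mul_assoc])

instance (G : Type*) [Fintype G] (n : ℕ) : Fintype (Brandt G n) :=
  inferInstanceAs (Fintype (Option (Fin n × G × Fin n)))

instance (G : Type*) [DecidableEq G] (n : ℕ) : DecidableEq (Brandt G n) :=
  inferInstanceAs (DecidableEq (Option (Fin n × G × Fin n)))

end Brandt

section Aux

variable {G : Type*} [Group G] [Fintype G] {n : ℕ}

omit [Fintype G] in
lemma brandt_mul_def (i k : Fin n) (a b : G) (j l : Fin n) :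
    Brandt.elem i a j * Brandt.elem k b l
      = if j = k then Brandt.elem (G := G) i (a * b) l else Brandt.zero := by
  show Brandt.mul _ _ = _
  simp only [Brandt.mul, Brandt.elem, Brandt.zero]

omit [Group G] [Fintype G] in
lemma elem_inj {i i' j j' : Fin n} {a a' : G}
    (h : Brandt.elem i a j = Brandt.elem i' a' j') : i = i' ∧ a = a' ∧ j = j' := by
  have h' : (some (i, a, j) : Option (Fin n × G × Fin n)) = some (i', a', j') := h
  simp only [Option.some.injEq, Prod.mk.injEq] at h'
  exact ⟨h'.1, h'.2.1, h'.2.2⟩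

omit [Group G] in
lemma card_brandt : Fintype.card (Brandt G n) = n ^ 2 * Fintype.card G + 1 := by
  have h : Fintype.card (Brandt G n) = Fintype.card (Option (Fin n × G × Fin n)) := rfl
  rw [h, Fintype.card_option, Fintype.card_prod, Fintype.card_prod]
  simp [Fintype.card_fin]
  ring

lemma arith1 (N : ℕ) (hn : 2 ≤ n) : (n ^ 2 - n + 1) * N + (n - 1) * N = n ^ 2 * N := by
  have e : (n ^ 2 - n + 1) + (n - 1) = n ^ 2 := by
    obtain ⟨m, rfl⟩ : ∃ m, n = m + 2 := ⟨n - 2, by omega⟩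
    have hsq : (m + 2) ^ 2 = m ^ 2 + 4 * m + 4 := by ring
    rw [hsq]; generalize m ^ 2 = q; omega
  rw [← add_mul, e]

lemma arith2 (X Y Z a b : ℕ) (h1 : X + Y = Z) (h2 : a + b = Z + 1) (h3 : b ≤ Y) :
    X + 1 ≤ a := by omega

lemma arith3 (X Y Z cd ud : ℕ) (h1 : X + Y = Z) (hu : ud = X + 2) (hc : Y ≤ cd)
    (hsum : cd + ud ≤ Z + 1) : False := by omega

/-- Every proper subsemigroup of `B(G,n)` misses at least `(n-1)|G|` elements. -/
lemma key (hn : 2 ≤ n) (S : Subsemigroup (Brandt G n)) (hS : S ≠ ⊤) :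
    ∃ C : Finset (Brandt G n), (∀ z ∈ C, z ∉ S) ∧
      (n - 1) * Fintype.card G ≤ C.card := by
  classical
  set N := Fintype.card G with hN
  by_cases h0 : Brandt.zero (G := G) (n := n) ∈ S
  · -- zero is in S; pick a nonzero element outside S
    have hex : ∃ x : Brandt G n, x ∉ S := by
      by_contra h; push_neg at h
      exact hS ((Subsemigroup.eq_top_iff' S).mpr h)
    obtain ⟨x, hx⟩ := hex
    have hxe : ∃ i a j, Brandt.elem (G := G) i a j ∉ S := by
      rcases x with _ | ⟨i, a, j⟩
      · exact absurd h0 hx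
      · exact ⟨i, a, j, hx⟩
    obtain ⟨i, a, j, hx⟩ := hxe
    have hd : ∀ (k : Fin n) (x : G),
        Brandt.elem i x k ∉ S ∨ Brandt.elem k (x⁻¹ * a) j ∉ S := by
      intro k x
      by_contra hc; push_neg at hc
      have hmem : Brandt.elem i x k * Brandt.elem k (x⁻¹ * a) j ∈ S :=
        S.mul_mem hc.1 hc.2
      have he : Brandt.elem i x k * Brandt.elem k (x⁻¹ * a) j = Brandt.elem i a j := by
        rw [brandt_mul_def, if_pos rfl, mul_inv_cancel_left]
      exact hx (he ▸ hmem)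
    set Crow : Finset (Brandt G n) :=
      Finset.univ.filter (fun z => z ∉ S ∧ ∃ p : G × Fin n, z = Brandt.elem i p.1 p.2)
      with hCrow
    set Ccol : Finset (Brandt G n) :=
      Finset.univ.filter (fun z => z ∉ S ∧ ∃ p : Fin n × G, z = Brandt.elem p.1 p.2 j)
      with hCcol
    set C : Finset (Brandt G n) := Finset.univ.filter (fun z => z ∉ S) with hC
    set f : Fin n × G → Brandt G n ⊕ Brandt G n := fun p =>
      if Brandt.elem i p.2 p.1 ∈ S then Sum.inr (Brandt.elem p.1 (p.2⁻¹ * a) j)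
      else Sum.inl (Brandt.elem i p.2 p.1) with hf
    have hmaps : ∀ p ∈ (Finset.univ : Finset (Fin n × G)), f p ∈ Crow.disjSum Ccol := by
      rintro ⟨k, x⟩ -
      simp only [hf]
      split_ifs with h
      · rcases hd k x with h' | h'
        · exact absurd h h'
        · rw [Finset.inr_mem_disjSum, hCcol, Finset.mem_filter]
          exact ⟨Finset.mem_univ _, h', ⟨(k, x⁻¹ * a), rfl⟩⟩
      · rw [Finset.inl_mem_disjSum, hCrow, Finset.mem_filter]
        exact ⟨Finset.mem_univ _, h, ⟨(x, k), rfl⟩⟩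
    have hinj : Set.InjOn f (Finset.univ : Finset (Fin n × G)) := by
      rintro ⟨k, x⟩ - ⟨k', x'⟩ - hpq
      simp only [hf] at hpq
      split_ifs at hpq
      all_goals try exact Sum.noConfusion hpq
      · -- inr = inr
        obtain ⟨hk, hxa, -⟩ := elem_inj (Sum.inr.inj hpq)
        have hxx : x = x' := inv_injective (mul_right_cancel hxa)
        exact Prod.ext hk hxx
      · -- inl = inl
        obtain ⟨-, hxx, hk⟩ := elem_inj (Sum.inl.inj hpq)
        exact Prod.ext hk hxx
    have h1 : n * N ≤ Crow.card + Ccol.card := by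
      have := Finset.card_le_card_of_injOn f hmaps hinj
      rwa [Finset.card_disjSum, Finset.card_univ, Fintype.card_prod, Fintype.card_fin] at this
    have h2 : (Crow ∪ Ccol).card ≤ C.card := by
      apply Finset.card_le_card
      apply Finset.union_subset <;> intro z hz <;>
        simp only [hCrow, hCcol, hC, Finset.mem_filter] at hz ⊢ <;>
        exact ⟨hz.1, hz.2.1⟩
    have h3 : (Crow ∩ Ccol).card ≤ N := by
      have hsub : Crow ∩ Ccol ⊆
          Finset.univ.image (fun x : G => Brandt.elem (G := G) i x j) := by
        intro z hz
        rw [Finset.mem_inter] at hz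
        obtain ⟨hz1, hz2⟩ := hz
        simp only [hCrow, hCcol, Finset.mem_filter] at hz1 hz2
        obtain ⟨-, -, ⟨⟨x, k⟩, rfl⟩⟩ := hz1
        obtain ⟨-, -, ⟨⟨k', y⟩, he⟩⟩ := hz2
        obtain ⟨rfl, rfl, rfl⟩ := elem_inj he
        exact Finset.mem_image_of_mem _ (Finset.mem_univ x)
      calc (Crow ∩ Ccol).card ≤ _ := Finset.card_le_card hsub
        _ ≤ (Finset.univ : Finset G).card := Finset.card_image_le
        _ = N := Finset.card_univ
    have h4 : Crow.card + Ccol.card = (Crow ∪ Ccol).card + (Crow ∩ Ccol).card :=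
      (Finset.card_union_add_card_inter _ _).symm
    refine ⟨C, fun z hz => (Finset.mem_filter.mp hz).2, ?_⟩
    have h5 : n * N ≤ C.card + N := by omega
    have e : (n - 1) * N + N = n * N := by
      have hn1 : (n - 1) + 1 = n := by omega
      calc (n - 1) * N + N = ((n - 1) + 1) * N := by ring
        _ = n * N := by rw [hn1]
    omega
  · -- zero is not in S
    have npos : 0 < n := by omega
    have hσlt : ∀ k : Fin n, (k.val + 1) % n < n := fun k => Nat.mod_lt _ npos
    set σ : Fin n → Fin n := fun k => ⟨(k.val + 1) % n, hσlt k⟩ with hσ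
    have hσne : ∀ k, σ k ≠ k := by
      intro k hk
      have hv : (k.val + 1) % n = k.val := congrArg Fin.val hk
      have hlt := k.isLt
      rcases Nat.lt_or_ge (k.val + 1) n with h | h
      · rw [Nat.mod_eq_of_lt h] at hv; omega
      · have he : k.val + 1 = n := by omega
        rw [he, Nat.mod_self] at hv
        omega
    set f : Fin n × G → Brandt G n := fun p => Brandt.elem p.1 p.2 (σ p.1) with hf
    have hfnotin : ∀ p : Fin n × G, f p ∉ S := by
      intro p hp
      have hsq : f p * f p ∈ S := S.mul_mem hp hp
      rw [hf] at hsq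
      simp only at hsq
      rw [brandt_mul_def, if_neg (hσne p.1)] at hsq
      exact h0 hsq
    have hfinj : Function.Injective f := by
      intro p q hpq
      obtain ⟨h1, h2, -⟩ := elem_inj hpq
      exact Prod.ext h1 h2
    refine ⟨Finset.univ.image f, ?_, ?_⟩
    · intro z hz
      obtain ⟨p, -, rfl⟩ := Finset.mem_image.mp hz
      exact hfnotin p
    · rw [Finset.card_image_of_injective _ hfinj, Finset.card_univ, Fintype.card_prod,
        Fintype.card_fin]
      exact Nat.mul_le_mul_right N (Nat.sub_le n 1)

end Aux

section Main

variable {G : Type*} [Group G] [Fintype G] {n : ℕ}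

/-- The large subsemigroup: everything except `{(i, a, 0) : i ≠ 0}`. -/
def S0 (G : Type*) [Group G] (n : ℕ) [NeZero n] : Subsemigroup (Brandt G n) where
  carrier := {x | ∀ p : Fin n × G × Fin n, x = some p → (p.2.2 ≠ 0 ∨ p.1 = 0)}
  mul_mem' := by
    intro x y hx hy p hp
    rcases x with _ | ⟨i, a, j⟩
    · exact absurd (show (none : Option (Fin n × G × Fin n)) = some p from hp) (by simp)
    · rcases y with _ | ⟨k, b, l⟩
      · have hp' : Brandt.mul (some (i, a, j)) none = some p := hp
        exact absurd (show (none : Option (Fin n × G × Fin n)) = some p from hp') (by simp)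
      · have hp' : Brandt.mul (some (i, a, j)) (some (k, b, l)) = some p := hp
        simp only [Brandt.mul] at hp'
        by_cases h : j = k <;> [replace hp' : (some (i, a * b, l) : Option (Fin n × G × Fin n)) = some p := (if_pos h).symm.trans hp'; exact absurd (hp'.symm.trans (if_neg h)) (by simp)]
        · obtain rfl : (i, a * b, l) = p := Option.some.inj hp'
          rcases hy (k, b, l) rfl with h' | h'
          · exact Or.inl h'
          · rcases hx (i, a, j) rfl with h'' | h''
            · exact absurd (h.trans h') h''
            · exact Or.inr h''

lemma zero_mem_S0 [NeZero n] : Brandt.zero (G := G) ∈ S0 G n := by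
  intro p hp
  exact absurd (show (none : Option (Fin n × G × Fin n)) = some p from hp) (by simp)

lemma elem_mem_S0 [NeZero n] {i : Fin n} {a : G} {j : Fin n} (h : j ≠ 0 ∨ i = 0) :
    Brandt.elem i a j ∈ S0 G n := by
  intro p hp
  obtain rfl : (i, a, j) = p :=
    Option.some.inj (show (some (i, a, j) : Option (Fin n × G × Fin n)) = some p from hp)
  exact h

lemma elem_not_mem_S0 [NeZero n] {i : Fin n} {a : G} (h : i ≠ 0) :
    Brandt.elem i a (0 : Fin n) ∉ S0 G n := by
  intro hmem
  rcases hmem (i, a, 0) rfl with h' | h'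
  · exact h' rfl
  · exact h h'

end Main


/-- **Howie–Ribeiro.** For every finite group `G` and every `n ≥ 2`, the large rank of
the Brandt semigroup `B(G, n)` — the least `k` such that every subset of cardinality
`k` generates `B(G, n)` — equals `(n² - n + 1)|G| + 2`. -/
theorem largeRank_brandt {G : Type*} [Group G] [Fintype G] (n : ℕ) (hn : 2 ≤ n) :
    IsLeast {k : ℕ | ∀ U : Finset (Brandt G n), U.card = k →
        Subsemigroup.closure (U : Set (Brandt G n)) = ⊤}
      ((n ^ 2 - n + 1) * Fintype.card G + 2) := by
  classical
  haveI : NeZero n := ⟨by omega⟩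
  set N := Fintype.card G with hN
  have hNpos : 0 < N := Fintype.card_pos
  constructor
  · -- membership: every set of this size generates
    intro U hU
    by_contra hne
    obtain ⟨C, hC, hcard⟩ := key hn (Subsemigroup.closure (U : Set (Brandt G n))) hne
    have hdisj : Disjoint C U := by
      rw [Finset.disjoint_left]
      intro z hz hzU
      exact hC z hz (Subsemigroup.subset_closure hzU)
    have hsum : C.card + U.card ≤ Fintype.card (Brandt G n) := by
      rw [← Finset.card_union_of_disjoint hdisj]
      exact Finset.card_le_univ _
    rw [card_brandt] at hsum
    exact arith3 ((n ^ 2 - n + 1) * N) ((n - 1) * N) (n ^ 2 * N) C.card U.card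
      (arith1 N hn) hU hcard hsum
  · -- lower bound
    intro k hk
    by_contra hlt
    push_neg at hlt
    have hk1 : k ≤ (n ^ 2 - n + 1) * N + 1 := Nat.lt_succ_iff.mp hlt
    -- the subsemigroup S0 is big
    set Sfin : Finset (Brandt G n) := Finset.univ.filter (fun z => z ∈ S0 G n) with hSfin
    set bad : Finset (Brandt G n) := Finset.univ.filter (fun z => z ∉ S0 G n) with hbad
    have hsplit : Sfin.card + bad.card = n ^ 2 * N + 1 := by
      rw [hSfin, hbad, Finset.card_filter_add_card_filter_not, Finset.card_univ,
        card_brandt]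
    have hbadcard : bad.card ≤ (n - 1) * N := by
      have hsub : bad ⊆ (((Finset.univ : Finset (Fin n)).erase 0) ×ˢ
          (Finset.univ : Finset G)).image
            (fun p : Fin n × G => Brandt.elem p.1 p.2 (0 : Fin n)) := by
        intro z hz
        rw [hbad, Finset.mem_filter] at hz
        obtain ⟨-, hz⟩ := hz
        rcases z with _ | ⟨i, a, j⟩
        · exact absurd zero_mem_S0 hz
        · by_cases hj : j ≠ 0 ∨ i = 0
          · exact absurd (elem_mem_S0 hj) hz
          push_neg at hj
          obtain ⟨rfl, hi⟩ := hj
          refine Finset.mem_image.mpr ⟨(i, a), ?_, rfl⟩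
          rw [Finset.mem_product]
          exact ⟨Finset.mem_erase.mpr ⟨hi, Finset.mem_univ _⟩, Finset.mem_univ _⟩
      calc bad.card ≤ _ := Finset.card_le_card hsub
        _ ≤ _ := Finset.card_image_le
        _ = (n - 1) * N := by
          rw [Finset.card_product, Finset.card_erase_of_mem (Finset.mem_univ _),
            Finset.card_univ, Finset.card_univ, Fintype.card_fin]
    have hSbig : (n ^ 2 - n + 1) * N + 1 ≤ Sfin.card :=
      arith2 ((n ^ 2 - n + 1) * N) ((n - 1) * N) (n ^ 2 * N) Sfin.card bad.card
        (arith1 N hn) hsplit hbadcard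
    obtain ⟨U, hUsub, hUcard⟩ := Finset.exists_subset_card_eq (le_trans hk1 hSbig)
    have htop := hk U hUcard
    have hle : Subsemigroup.closure (U : Set (Brandt G n)) ≤ S0 G n := by
      apply Subsemigroup.closure_le.mpr
      intro z hz
      exact (Finset.mem_filter.mp (hUsub hz)).2
    rw [htop] at hle
    have hbadelem : Brandt.elem (⟨1, by omega⟩ : Fin n) (1 : G) (0 : Fin n) ∈ S0 G n :=
      hle (Subsemigroup.mem_top _)
    exact elem_not_mem_S0 (by simp [Fin.ext_iff]) hbadelem
end

section
/- Let n ≥ 3, p, r ∈ [n − 1] and q, s ∈ [n]. The product ζ_{(p, q)} ζ_{(r, s)} in 𝒪_n lies in J_{n−1} (i.e., its image has cardinality n − 1) if and only if q ∈ {r, r + 1}; and in that case ζ_{(p, q)} ζ_{(r, s)} = ζ_{(p, s)}. -/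
/-- The semigroup `𝒪ₙ` of order-preserving singular (non-bijective) selfmaps of
`[n] = {1, …, n}`, encoded as maps `Fin n → Fin n`.  Composition is applied
left to right: `(f * g) x = g (f x)`. -/
def OrderSing (n : ℕ) : Type :=
  {f : Fin n → Fin n // Monotone f ∧ ¬ Function.Bijective f}

instance (n : ℕ) : Semigroup (OrderSing n) where
  mul f g := ⟨g.1 ∘ f.1, g.2.1.comp f.2.1, fun h =>
    f.2.2 ((Finite.injective_iff_bijective).mp (Function.Injective.of_comp h.1))⟩
  mul_assoc _ _ _ := rfl

/-- `f` is the element `ζ_{(i, k)}` of `𝒪ₙ` (for `i ∈ [n-1]`, `k ∈ [n]`, 1-indexed):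
the unique non-singleton kernel class of `f` is `{i, i+1}` and the image of `f` is
`[n] \ {k}`.  Here `Fin n` is identified with `[n] = {1, …, n}` via `x ↦ (x : ℕ) + 1`. -/

lemma mono_eq_of_ker_range {n : ℕ} (f g : Fin n → Fin n) (hf : Monotone f) (hg : Monotone g)
    (hker : ∀ x y, f x = f y ↔ g x = g y) (hrange : Set.range f = Set.range g) :
    f = g := by
  match n with
  | 0 => funext x; exact x.elim0
  | Nat.succ m =>
  funext x
  induction x using Fin.induction with
  | zero =>
    apply le_antisymm
    · obtain ⟨y, hy⟩ : g 0 ∈ Set.range f := hrange ▸ Set.mem_range_self 0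
      calc f 0 ≤ f y := hf (Fin.zero_le y)
        _ = g 0 := hy
    · obtain ⟨y, hy⟩ : f 0 ∈ Set.range g := hrange ▸ Set.mem_range_self 0
      calc g 0 ≤ g y := hg (Fin.zero_le y)
        _ = f 0 := hy
  | succ x ih =>
    by_cases h : f x.succ = f x.castSucc
    · rw [h, ih, (hker _ _).mp h]
    · have hgne : g x.succ ≠ g x.castSucc := fun hh => h ((hker _ _).mpr hh)
      apply le_antisymm
      · obtain ⟨y, hy⟩ : g x.succ ∈ Set.range f := hrange ▸ Set.mem_range_self _
        have h1 : f x.castSucc < f y := by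
          rw [hy, ih]
          exact lt_of_le_of_ne (hg (Fin.castSucc_le_succ x)) (Ne.symm hgne)
        have : x.castSucc < y := by
          by_contra hc
          exact absurd (hf (not_lt.mp hc)) (not_le.mpr h1)
        calc f x.succ ≤ f y := hf (Fin.castSucc_lt_iff_succ_le.mp this)
          _ = g x.succ := hy
      · obtain ⟨y, hy⟩ : f x.succ ∈ Set.range g := hrange ▸ Set.mem_range_self _
        have h1 : g x.castSucc < g y := by
          rw [hy, ← ih]
          exact lt_of_le_of_ne (hf (Fin.castSucc_le_succ x)) (Ne.symm h)
        have : x.castSucc < y := by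
          by_contra hc
          exact absurd (hg (not_lt.mp hc)) (not_le.mpr h1)
        calc g x.succ ≤ g y := hg (Fin.castSucc_lt_iff_succ_le.mp this)
          _ = f x.succ := hy

theorem zeta_mul_aux (n : ℕ) (hn : 3 ≤ n) (p r q s : ℕ)
    (hp : 1 ≤ p ∧ p ≤ n - 1) (hr : 1 ≤ r ∧ r ≤ n - 1)
    (hq : 1 ≤ q ∧ q ≤ n) (hs : 1 ≤ s ∧ s ≤ n)
    (fpq frs fps : {f : Fin n → Fin n // Monotone f ∧ ¬ Function.Bijective f})
    (hpq1 : ∀ x y : Fin n, fpq.1 x = fpq.1 y ↔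
      (x = y ∨ (((x : ℕ) + 1 = p ∨ (x : ℕ) + 1 = p + 1) ∧
                ((y : ℕ) + 1 = p ∨ (y : ℕ) + 1 = p + 1))))
    (hpq2 : Set.range fpq.1 = {y : Fin n | (y : ℕ) + 1 ≠ q})
    (hrs1 : ∀ x y : Fin n, frs.1 x = frs.1 y ↔
      (x = y ∨ (((x : ℕ) + 1 = r ∨ (x : ℕ) + 1 = r + 1) ∧
                ((y : ℕ) + 1 = r ∨ (y : ℕ) + 1 = r + 1))))
    (hrs2 : Set.range frs.1 = {y : Fin n | (y : ℕ) + 1 ≠ s})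
    (hps1 : ∀ x y : Fin n, fps.1 x = fps.1 y ↔
      (x = y ∨ (((x : ℕ) + 1 = p ∨ (x : ℕ) + 1 = p + 1) ∧
                ((y : ℕ) + 1 = p ∨ (y : ℕ) + 1 = p + 1))))
    (hps2 : Set.range fps.1 = {y : Fin n | (y : ℕ) + 1 ≠ s}) :
    ((Set.range (frs.1 ∘ fpq.1)).ncard = n - 1 ↔ (q = r ∨ q = r + 1)) ∧
    ((q = r ∨ q = r + 1) → frs.1 ∘ fpq.1 = fps.1) := by
  have hrangepq : ∀ x : Fin n, (fpq.1 x : ℕ) + 1 ≠ q := by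
    intro x
    have : fpq.1 x ∈ Set.range fpq.1 := Set.mem_range_self x
    rw [hpq2] at this; exact this
  have hrangers : ∀ x : Fin n, (frs.1 x : ℕ) + 1 ≠ s := by
    intro x
    have : frs.1 x ∈ Set.range frs.1 := Set.mem_range_self x
    rw [hrs2] at this; exact this
  have main : (q = r ∨ q = r + 1) → frs.1 ∘ fpq.1 = fps.1 := by
    intro hq'
    apply mono_eq_of_ker_range _ _ (frs.2.1.comp fpq.2.1) fps.2.1
    · -- kernels agree
      intro x y
      have key : frs.1 (fpq.1 x) = frs.1 (fpq.1 y) ↔ fpq.1 x = fpq.1 y := by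
        constructor
        · intro h
          rcases (hrs1 _ _).mp h with h' | ⟨ha, hb⟩
          · exact h'
          · have h1 := hrangepq x
            have h2 := hrangepq y
            apply Fin.ext; omega
        · exact fun h => congrArg _ h
      simp only [Function.comp_apply]
      rw [key, hpq1, hps1]
    · -- ranges agree
      rw [Set.range_comp, hpq2, hps2]
      ext y
      constructor
      · rintro ⟨z, _, rfl⟩
        exact hrangers z
      · intro hy
        have : y ∈ Set.range frs.1 := by rw [hrs2]; exact hy
        obtain ⟨z, rfl⟩ := this
        by_cases hz : (z : ℕ) + 1 = q
        · rcases hq' with h' | h'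
          · refine ⟨⟨r, by omega⟩, ?_, ?_⟩
            · show (r : ℕ) + 1 ≠ q; omega
            · exact (hrs1 _ _).mpr (Or.inr ⟨Or.inr rfl, Or.inl (by omega)⟩)
          · refine ⟨⟨r - 1, by omega⟩, ?_, ?_⟩
            · show (r - 1 : ℕ) + 1 ≠ q; omega
            · exact (hrs1 _ _).mpr (Or.inr ⟨Or.inl (by show (r - 1) + 1 = r; omega), Or.inr (by omega)⟩)
        · exact ⟨z, hz, rfl⟩
  refine ⟨⟨?_, ?_⟩, main⟩
  · -- ncard = n-1 → q ∈ {r, r+1}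
    intro h
    by_contra hq'
    push_neg at hq'
    set u := frs.1 ⟨q - 1, by omega⟩ with hu
    have hau : (⟨s - 1, by omega⟩ : Fin n) ≠ u := by
      have := hrangers ⟨q - 1, by omega⟩
      rw [← hu] at this
      intro hh
      rw [← hh] at this
      simp at this; omega
    have hsub : Set.range (frs.1 ∘ fpq.1) ⊆ ({⟨s - 1, by omega⟩, u} : Set (Fin n))ᶜ := by
      rintro _ ⟨x, rfl⟩
      simp only [Set.mem_compl_iff, Set.mem_insert_iff, Set.mem_singleton_iff, not_or]
      constructor
      · intro hh
        have := hrangers (fpq.1 x)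
        simp only [Function.comp_apply] at hh
        rw [hh] at this
        simp at this; omega
      · intro hh
        rcases (hrs1 _ _).mp hh with h' | ⟨_, hb⟩
        · have := hrangepq x
          rw [h'] at this
          simp at this; omega
        · simp at hb; omega
    have hcard2 : ({⟨s - 1, by omega⟩, u} : Set (Fin n)).ncard = 2 := Set.ncard_pair hau
    have hcompl : (({⟨s - 1, by omega⟩, u} : Set (Fin n))ᶜ).ncard = n - 2 := by
      have := Set.ncard_add_ncard_compl ({⟨s - 1, by omega⟩, u} : Set (Fin n))
      simp [hcard2, Nat.card_eq_fintype_card] at this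
      omega
    have hle := Set.ncard_le_ncard hsub (Set.toFinite _)
    rw [h, hcompl] at hle
    omega
  · -- q ∈ {r, r+1} → ncard = n-1
    intro hq'
    rw [main hq', hps2]
    have heq : {y : Fin n | (y : ℕ) + 1 ≠ s} = ({⟨s - 1, by omega⟩} : Set (Fin n))ᶜ := by
      ext y
      simp [Fin.ext_iff]
      omega
    rw [heq]
    have := Set.ncard_add_ncard_compl ({⟨s - 1, by omega⟩} : Set (Fin n))
    simp [Nat.card_eq_fintype_card] at this
    omega

def IsZeta {n : ℕ} (i k : ℕ) (f : OrderSing n) : Prop :=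
  (∀ x y : Fin n, f.1 x = f.1 y ↔
      (x = y ∨ (((x : ℕ) + 1 = i ∨ (x : ℕ) + 1 = i + 1) ∧
                ((y : ℕ) + 1 = i ∨ (y : ℕ) + 1 = i + 1)))) ∧
  Set.range f.1 = {y : Fin n | (y : ℕ) + 1 ≠ k}

/-- For `n ≥ 3`, `p, r ∈ [n - 1]` and `q, s ∈ [n]`, the product `ζ_{(p,q)} ζ_{(r,s)}`
lies in `J_{n-1}` (its image has cardinality `n - 1`) if and only if `q ∈ {r, r + 1}`;
and in that case `ζ_{(p,q)} ζ_{(r,s)} = ζ_{(p,s)}`. -/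
theorem zeta_mul_mem_J_iff (n : ℕ) (hn : 3 ≤ n) (p r q s : ℕ)
    (hp : 1 ≤ p ∧ p ≤ n - 1) (hr : 1 ≤ r ∧ r ≤ n - 1)
    (hq : 1 ≤ q ∧ q ≤ n) (hs : 1 ≤ s ∧ s ≤ n)
    (fpq frs fps : OrderSing n)
    (hpq : IsZeta p q fpq) (hrs : IsZeta r s frs) (hps : IsZeta p s fps) :
    ((Set.range (fpq * frs).1).ncard = n - 1 ↔ (q = r ∨ q = r + 1)) ∧
    ((q = r ∨ q = r + 1) → fpq * frs = fps) := by
  obtain ⟨hpq1, hpq2⟩ := hpq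
  obtain ⟨hrs1, hrs2⟩ := hrs
  obtain ⟨hps1, hps2⟩ := hps
  have h := zeta_mul_aux n hn p r q s hp hr hq hs fpq frs fps hpq1 hpq2 hrs1 hrs2 hps1 hps2
  exact ⟨h.1, fun hq' => Subtype.ext (h.2 hq')⟩
end

section
/- Let n ≥ 3, p ∈ [n − 1], q ∈ [n], and j ∈ [n − 1]. Then ζ_{(p, q)} = ζ_{(p, j)} ζ_{(j, q)} if q > j, and ζ_{(p, q)} = ζ_{(p, j+1)} ζ_{(j, q)} if q ≤ j. -/
/-- Two monotone selfmaps of `Fin n` with the same kernel and the same range are equal. -/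
lemma mono_unique {n : ℕ} {F G : Fin n → Fin n} (hF : Monotone F) (hG : Monotone G)
    (hker : ∀ x y, F x = F y ↔ G x = G y) (hrange : Set.range F = Set.range G) : F = G := by
  funext x
  suffices h : ∀ k (hk : k < n), F ⟨k, hk⟩ = G ⟨k, hk⟩ by
    have := h x.1 x.2
    simpa using this
  intro k
  induction k with
  | zero =>
    intro hk
    apply le_antisymm
    · have h1 : G ⟨0, hk⟩ ∈ Set.range F := by rw [hrange]; exact Set.mem_range_self _
      obtain ⟨t, ht⟩ := h1
      calc F ⟨0, hk⟩ ≤ F t := hF (by simp [Fin.le_def])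
        _ = G ⟨0, hk⟩ := ht
    · have h1 : F ⟨0, hk⟩ ∈ Set.range G := by rw [← hrange]; exact Set.mem_range_self _
      obtain ⟨t, ht⟩ := h1
      calc G ⟨0, hk⟩ ≤ G t := hG (by simp [Fin.le_def])
        _ = F ⟨0, hk⟩ := ht
  | succ m ih =>
    intro hk
    have hm : m < n := Nat.lt_of_succ_lt hk
    have ihx : F ⟨m, hm⟩ = G ⟨m, hm⟩ := ih hm
    set x : Fin n := ⟨m, hm⟩ with hxdef
    set x' : Fin n := ⟨m + 1, hk⟩ with hx'def
    have hxx' : x ≤ x' := by simp [Fin.le_def, hxdef, hx'def]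
    by_cases hc : F x' = F x
    · have hG' : G x' = G x := (hker x' x).mp hc
      rw [hc, hG']; exact ihx
    · have hGne : G x' ≠ G x := fun h => hc ((hker x' x).mpr h)
      have hFlt : F x < F x' := lt_of_le_of_ne (hF hxx') (fun h => hc h.symm)
      have hGlt : G x < G x' := lt_of_le_of_ne (hG hxx') (fun h => hGne h.symm)
      apply le_antisymm
      · have h1 : G x' ∈ Set.range F := by rw [hrange]; exact Set.mem_range_self _
        obtain ⟨t, ht⟩ := h1
        have hxt : x' ≤ t := by
          by_contra hlt
          push_neg at hlt
          have h2 : F t ≤ F x := hF (by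
            have : (t : ℕ) < m + 1 := hlt
            simp only [Fin.le_def]; exact Nat.le_of_lt_succ this)
          rw [ht, ihx] at h2
          exact absurd h2 (not_le.mpr hGlt)
        calc F x' ≤ F t := hF hxt
          _ = G x' := ht
      · have h1 : F x' ∈ Set.range G := by rw [← hrange]; exact Set.mem_range_self _
        obtain ⟨t, ht⟩ := h1
        have hxt : x' ≤ t := by
          by_contra hlt
          push_neg at hlt
          have h2 : G t ≤ G x := hG (by
            have : (t : ℕ) < m + 1 := hlt
            simp only [Fin.le_def]; exact Nat.le_of_lt_succ this)
          rw [ht, ← ihx] at h2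
          exact absurd h2 (not_le.mpr hFlt)
        calc G x' ≤ G t := hG hxt
          _ = F x' := ht

lemma ncard_ne_set {n k : ℕ} (h1 : 1 ≤ k) (h2 : k ≤ n) :
    ({a : Fin n | (a : ℕ) + 1 ≠ k}).ncard = n - 1 := by
  have he : {a : Fin n | (a : ℕ) + 1 ≠ k} = ({(⟨k - 1, by omega⟩ : Fin n)} : Set (Fin n))ᶜ := by
    ext a
    simp [Fin.ext_iff]
    omega
  rw [he]
  have hc := Set.ncard_add_ncard_compl ({(⟨k - 1, by omega⟩ : Fin n)} : Set (Fin n))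
    (Set.toFinite _) (Set.toFinite _)
  rw [Set.ncard_singleton, Nat.card_eq_fintype_card, Fintype.card_fin] at hc
  omega

/-- Key lemma: if `m ∈ {j, j+1}` then `ζ_{(p,q)} = ζ_{(p,m)} ζ_{(j,q)}`. -/
lemma zeta_comp {n p q j m : ℕ} (hm1 : 1 ≤ m) (hm2 : m ≤ n) (hq1 : 1 ≤ q) (hq2 : q ≤ n)
    (hm : m = j ∨ m = j + 1)
    (f g h : OrderSing n) (hf : IsZeta p q f) (hg : IsZeta p m g) (hh : IsZeta j q h) :
    f = g * h := by
  apply Subtype.ext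
  show f.1 = h.1 ∘ g.1
  refine mono_unique f.2.1 (h.2.1.comp g.2.1) ?_ ?_
  · intro x y
    have hgx : (g.1 x : ℕ) + 1 ≠ m := by
      have hx : g.1 x ∈ Set.range g.1 := Set.mem_range_self _
      rw [hg.2] at hx; exact hx
    have hgy : (g.1 y : ℕ) + 1 ≠ m := by
      have hy : g.1 y ∈ Set.range g.1 := Set.mem_range_self _
      rw [hg.2] at hy; exact hy
    constructor
    · intro hfe
      have h1 := (hf.1 x y).mp hfe
      have hge : g.1 x = g.1 y := (hg.1 x y).mpr h1
      show h.1 (g.1 x) = h.1 (g.1 y)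
      rw [hge]
    · intro hhe
      have h1 := (hh.1 (g.1 x) (g.1 y)).mp hhe
      have hge : g.1 x = g.1 y := by
        rcases h1 with h1 | ⟨h1, h2⟩
        · exact h1
        · apply Fin.ext; omega
      exact (hf.1 x y).mpr ((hg.1 x y).mp hge)
  · rw [hf.2, Set.range_comp, hg.2]
    have hsub : h.1 '' {a : Fin n | (a : ℕ) + 1 ≠ m} ⊆ {y : Fin n | (y : ℕ) + 1 ≠ q} := by
      rintro y ⟨a, -, rfl⟩
      rw [← hh.2]
      exact Set.mem_range_self _
    have hinj : Set.InjOn h.1 {a : Fin n | (a : ℕ) + 1 ≠ m} := by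
      intro a ha b hb hab
      rcases (hh.1 a b).mp hab with h1 | ⟨h1, h2⟩
      · exact h1
      · simp only [Set.mem_setOf_eq] at ha hb
        apply Fin.ext; omega
    have hcard : ({y : Fin n | (y : ℕ) + 1 ≠ q}).ncard ≤
        (h.1 '' {a : Fin n | (a : ℕ) + 1 ≠ m}).ncard := by
      rw [Set.ncard_image_of_injOn hinj, ncard_ne_set hm1 hm2, ncard_ne_set hq1 hq2]
    exact (Set.eq_of_subset_of_ncard_le hsub hcard (Set.toFinite _)).symm

/-- For `n ≥ 3`, `p ∈ [n - 1]`, `q ∈ [n]` and `j ∈ [n - 1]`: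
`ζ_{(p,q)} = ζ_{(p,j)} ζ_{(j,q)}` if `q > j`, and
`ζ_{(p,q)} = ζ_{(p,j+1)} ζ_{(j,q)}` if `q ≤ j`. -/
theorem zeta_decomposition (n : ℕ) (hn : 3 ≤ n) (p q j : ℕ)
    (hp : 1 ≤ p ∧ p ≤ n - 1) (hq : 1 ≤ q ∧ q ≤ n) (hj : 1 ≤ j ∧ j ≤ n - 1)
    (fpq fpj fpj1 fjq : OrderSing n)
    (hpq : IsZeta p q fpq) (hpj : IsZeta p j fpj)
    (hpj1 : IsZeta p (j + 1) fpj1) (hjq : IsZeta j q fjq) :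
    (j < q → fpq = fpj * fjq) ∧ (q ≤ j → fpq = fpj1 * fjq) := by
  constructor
  · intro _
    exact zeta_comp hj.1 (by omega) hq.1 hq.2 (Or.inl rfl) fpq fpj fjq hpq hpj hjq
  · intro _
    exact zeta_comp (by omega) (by omega) hq.1 hq.2 (Or.inr rfl) fpq fpj1 fjq hpq hpj1 hjq
end

section
/- For n ≥ 3 and 1 ≤ r ≤ n − 2, every element α of J_r can be written as α = βδ for some β, δ ∈ J_{r+1} in the semigroup 𝒪_n. -/
lemma ivt_nat (g : ℕ → ℕ) (hstep : ∀ i, g (i+1) ≤ g i + 1)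
    (a b k : ℕ) (hab : a ≤ b) (ha : g a ≤ k) :
    k ≤ g b → ∃ c, a ≤ c ∧ c ≤ b ∧ g c = k := by
  induction b, hab using Nat.le_induction with
  | base => exact fun hb => ⟨a, le_rfl, le_rfl, le_antisymm ha hb⟩
  | succ b hab ih =>
    intro hb
    by_cases h : k ≤ g b
    · obtain ⟨c, h1, h2, h3⟩ := ih h
      exact ⟨c, h1, h2.trans (Nat.le_succ b), h3⟩
    · refine ⟨b+1, hab.trans (Nat.le_succ b), le_rfl, ?_⟩
      have := hstep b
      omega

set_option maxHeartbeats 4000000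

/-- For `n ≥ 3` and `1 ≤ r ≤ n - 2`, every element `α` of
`J_r = {α ∈ 𝒪ₙ : |im α| = r}` can be written as `α = β δ` with `β, δ ∈ J_{r+1}`. -/
theorem mem_J_eq_mul_of_succ (n r : ℕ) (hn : 3 ≤ n) (hr1 : 1 ≤ r) (hr2 : r ≤ n - 2)
    (α : OrderSing n) (hα : (Set.range α.1).ncard = r) :
    ∃ β δ : OrderSing n, (Set.range β.1).ncard = r + 1 ∧
      (Set.range δ.1).ncard = r + 1 ∧ α = β * δ := by
  have hr1n : r + 1 < n := by omega
  obtain ⟨f, hmono, hnbij⟩ := α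
  have hα' : (Set.range f).ncard = r := hα
  clear hα
  -- the image as a finset
  obtain ⟨A, hAdef⟩ : ∃ A : Finset (Fin n), A = Finset.image f Finset.univ := ⟨_, rfl⟩
  have hAcoe : (A : Set (Fin n)) = Set.range f := by
    rw [hAdef]; simp
  have hAcard : A.card = r := by
    rw [← Set.ncard_coe_finset, hAcoe, hα']
  have hmemA : ∀ x, f x ∈ A := by
    intro x
    rw [hAdef]
    exact Finset.mem_image_of_mem f (Finset.mem_univ x)
  have hAmem : ∀ v ∈ A, ∃ x, f x = v := by
    intro v hv
    rw [hAdef] at hv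
    obtain ⟨x, -, hx⟩ := Finset.mem_image.mp hv
    exact ⟨x, hx⟩
  -- an adjacent duplicated pair
  have hninj : ¬ Function.Injective f := fun h => hnbij ((Finite.injective_iff_bijective).mp h)
  have hdup : ∃ x : Fin n, ∃ h : x.val + 1 < n, f x = f ⟨x.val + 1, h⟩ := by
    rw [Function.not_injective_iff] at hninj
    obtain ⟨a, b, hfab, hab⟩ := hninj
    have key : ∀ a b : Fin n, a < b → f a = f b →
        ∃ x : Fin n, ∃ h : x.val + 1 < n, f x = f ⟨x.val + 1, h⟩ := by
      intro a b hlt hfe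
      have hb := b.isLt
      have hlt' : a.val < b.val := hlt
      have h1 : a.val + 1 < n := by omega
      refine ⟨a, h1, le_antisymm (hmono ?_) ?_⟩
      · exact Fin.le_def.mpr (by simp)
      · have : f (⟨a.val + 1, h1⟩ : Fin n) ≤ f b := hmono (Fin.le_def.mpr (by simpa using hlt'))
        rw [← hfe] at this
        exact this
    rcases lt_or_gt_of_ne hab with h | h
    · exact key a b h hfab
    · exact key b a h hfab.symm
  obtain ⟨x₀, hx₀n, hx₀⟩ := hdup
  -- the least value missing from the image
  have hCne : (Finset.univ.filter (fun v : Fin n => v ∉ A)).Nonempty := by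
    by_contra hc
    rw [Finset.not_nonempty_iff_eq_empty, Finset.filter_eq_empty_iff] at hc
    have : A = Finset.univ :=
      Finset.eq_univ_iff_forall.mpr (fun v => not_not.mp (hc (Finset.mem_univ v)))
    rw [this, Finset.card_univ, Fintype.card_fin] at hAcard
    omega
  obtain ⟨e, he, hemin⟩ : ∃ e : Fin n, e ∉ A ∧ ∀ v : Fin n, v < e → v ∈ A := by
    refine ⟨(Finset.univ.filter (fun v : Fin n => v ∉ A)).min' hCne, ?_, ?_⟩
    · have := Finset.min'_mem _ hCne
      rw [Finset.mem_filter] at this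
      exact this.2
    · intro v hv
      by_contra hvA
      have hvC : v ∈ Finset.univ.filter (fun v : Fin n => v ∉ A) := by
        rw [Finset.mem_filter]
        exact ⟨Finset.mem_univ _, hvA⟩
      exact absurd hv (not_lt.mpr (Finset.min'_le _ v hvC))
  have hfne : ∀ x, f x ≠ e := fun x h => he (h ▸ hmemA x)
  -- the rank function
  obtain ⟨ρ, hρdef⟩ : ∃ ρ : Fin n → ℕ, ∀ x, ρ x = (A.filter (fun v => v < f x)).card :=
    ⟨_, fun _ => rfl⟩
  have hρmono : ∀ x y : Fin n, f x ≤ f y → ρ x ≤ ρ y := by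
    intro x y h
    rw [hρdef x, hρdef y]
    apply Finset.card_le_card
    intro v hv
    rw [Finset.mem_filter] at hv ⊢
    exact ⟨hv.1, lt_of_lt_of_le hv.2 h⟩
  have hρlt : ∀ x y : Fin n, f x < f y → ρ x < ρ y := by
    intro x y h
    rw [hρdef x, hρdef y]
    apply Finset.card_lt_card
    rw [Finset.ssubset_iff_of_subset]
    · exact ⟨f x, Finset.mem_filter.mpr ⟨hmemA x, h⟩, by simp [Finset.mem_filter]⟩
    · intro v hv
      rw [Finset.mem_filter] at hv ⊢
      exact ⟨hv.1, hv.2.trans h⟩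
  have hρeqf : ∀ x y : Fin n, ρ x = ρ y → f x = f y := by
    intro x y h
    rcases lt_trichotomy (f x) (f y) with h' | h' | h'
    · exact absurd h (ne_of_lt (hρlt x y h'))
    · exact h'
    · exact absurd h.symm (ne_of_lt (hρlt y x h'))
  have hρltr : ∀ x : Fin n, ρ x < r := by
    intro x
    rw [hρdef x, ← hAcard]
    apply Finset.card_lt_card
    rw [Finset.ssubset_iff_of_subset (Finset.filter_subset _ _)]
    exact ⟨f x, hmemA x, by simp [Finset.mem_filter]⟩
  have hρcongr : ∀ x y : Fin n, f x = f y → ρ x = ρ y := by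
    intro x y h
    rw [hρdef x, hρdef y, h]
  have hρstep : ∀ (i : ℕ) (h : i + 1 < n), ρ ⟨i+1, h⟩ ≤ ρ ⟨i, by omega⟩ + 1 := by
    intro i h
    rw [hρdef, hρdef]
    have hsub : A.filter (fun v => v < f ⟨i+1, h⟩) ⊆
        insert (f ⟨i, by omega⟩) (A.filter (fun v => v < f ⟨i, by omega⟩)) := by
      intro v hv
      rw [Finset.mem_filter] at hv
      obtain ⟨z, hz⟩ := hAmem v hv.1
      have hvle : v ≤ f ⟨i, by omega⟩ := by
        by_contra hc
        push_neg at hc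
        have hzgt : f ⟨i, by omega⟩ < f z := hz ▸ hc
        have hiz : (⟨i, by omega⟩ : Fin n) < z := by
          by_contra hc2
          exact absurd (hmono (not_lt.mp hc2)) (not_le.mpr hzgt)
        have h2 : f ⟨i+1, h⟩ ≤ f z := hmono (Fin.le_def.mpr (by
          have := Fin.lt_def.mp hiz
          simp only [Fin.val_mk] at this ⊢
          omega))
        rw [hz] at h2
        exact absurd hv.2 (not_lt.mpr h2)
      rcases eq_or_lt_of_le hvle with h' | h'
      · exact Finset.mem_insert.mpr (Or.inl h')
      · exact Finset.mem_insert.mpr (Or.inr (Finset.mem_filter.mpr ⟨hv.1, h'⟩))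
    calc (A.filter (fun v => v < f ⟨i+1, h⟩)).card
        ≤ (insert (f ⟨i, by omega⟩) (A.filter (fun v => v < f ⟨i, by omega⟩))).card :=
          Finset.card_le_card hsub
      _ ≤ _ + 1 := Finset.card_insert_le _ _
  have hρ0 : ρ ⟨0, by omega⟩ = 0 := by
    rw [hρdef]
    rw [Finset.card_eq_zero, Finset.filter_eq_empty_iff]
    intro v hv
    obtain ⟨z, hz⟩ := hAmem v hv
    have : f ⟨0, by omega⟩ ≤ f z := hmono (Fin.le_def.mpr (Nat.zero_le _))
    rw [hz] at this
    exact not_lt.mpr this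
  have hρlast : ρ ⟨n-1, by omega⟩ = r - 1 := by
    have hfilt : A.filter (fun v => v < f ⟨n-1, by omega⟩) = A.erase (f ⟨n-1, by omega⟩) := by
      ext v
      rw [Finset.mem_filter, Finset.mem_erase]
      constructor
      · exact fun h => ⟨ne_of_lt h.2, h.1⟩
      · rintro ⟨hne, hv⟩
        obtain ⟨z, hz⟩ := hAmem v hv
        have h2 : f z ≤ f ⟨n-1, by omega⟩ := hmono (Fin.le_def.mpr (by
          have := z.isLt
          simp only [Fin.val_mk]
          omega))
        rw [hz] at h2
        exact ⟨hv, lt_of_le_of_ne h2 hne⟩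
    rw [hρdef, hfilt, Finset.card_erase_of_mem (hmemA _), hAcard]
  -- the split rank function
  obtain ⟨σ, hσdef⟩ : ∃ σ : Fin n → ℕ,
      ∀ x, σ x = ρ x + (if x₀ < x ∧ f x₀ ≤ f x then 1 else 0) := ⟨_, fun _ => rfl⟩
  have hindmono : ∀ x y : Fin n, x ≤ y →
      (if x₀ < x ∧ f x₀ ≤ f x then 1 else 0) ≤ (if x₀ < y ∧ f x₀ ≤ f y then (1:ℕ) else 0) := by
    intro x y h
    by_cases h1 : x₀ < x ∧ f x₀ ≤ f x
    · rw [if_pos h1, if_pos ⟨lt_of_lt_of_le h1.1 h, h1.2.trans (hmono h)⟩]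
    · rw [if_neg h1]
      exact Nat.zero_le _
  have hσmono : ∀ x y : Fin n, x ≤ y → σ x ≤ σ y := by
    intro x y h
    rw [hσdef x, hσdef y]
    exact Nat.add_le_add (hρmono x y (hmono h)) (hindmono x y h)
  have hσle : ∀ x : Fin n, σ x ≤ r := by
    intro x
    have h1 := hρltr x
    rw [hσdef]
    split_ifs <;> omega
  -- the insertion position
  obtain ⟨m, hmdef⟩ : ∃ m : ℕ, m = e.val + (if f x₀ < e then 1 else 0) := ⟨_, rfl⟩
  have heval : e.val ≤ r := by
    rw [← hAcard, ← Fin.card_Iio e]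
    exact Finset.card_le_card (fun v hv => hemin v (Finset.mem_Iio.mp hv))
  have hmle : m ≤ r + 1 := by
    rw [hmdef]; split_ifs <;> omega
  -- Fact 1 : f x < e ↔ σ x < m
  have hfa : ∀ x : Fin n, f x < e → σ x < m := by
    intro x hfe
    have hfilt : A.filter (fun v => v < f x) = Finset.Iio (f x) := by
      ext v
      rw [Finset.mem_filter, Finset.mem_Iio]
      exact ⟨fun h => h.2, fun h => ⟨hemin v (h.trans hfe), h⟩⟩
    have hρx : ρ x = (f x).val := by
      rw [hρdef, hfilt, Fin.card_Iio]
    have hfelt : (f x).val < e.val := hfe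
    rw [hσdef, hmdef, hρx]
    by_cases hc : f x₀ < e
    · rw [if_pos hc]
      split_ifs <;> omega
    · rw [if_neg hc]
      have hind : ¬ (x₀ < x ∧ f x₀ ≤ f x) := by
        rintro ⟨-, h2⟩
        exact hc (lt_of_le_of_lt h2 hfe)
      rw [if_neg hind]
      omega
  have hfb : ∀ x : Fin n, e < f x → m ≤ σ x := by
    intro x hfe
    have hρge : e.val ≤ ρ x := by
      rw [← Fin.card_Iio e, hρdef]
      apply Finset.card_le_card
      intro v hv
      rw [Finset.mem_Iio] at hv
      exact Finset.mem_filter.mpr ⟨hemin v hv, hv.trans hfe⟩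
    rw [hσdef, hmdef]
    by_cases hc : f x₀ < e
    · rw [if_pos hc]
      have h1 : f x₀ < f x := hc.trans hfe
      have h2 : x₀ < x := by
        by_contra hc2
        exact absurd (hmono (not_lt.mp hc2)) (not_le.mpr h1)
      rw [if_pos ⟨h2, le_of_lt h1⟩]
      omega
    · rw [if_neg hc]
      split_ifs <;> omega
  have hfa' : ∀ x : Fin n, σ x < m → f x < e := by
    intro x h
    by_contra hc
    have : e < f x := lt_of_le_of_ne (not_lt.mp hc) (Ne.symm (hfne x))
    exact absurd h (not_lt.mpr (hfb x this))
  have hfb' : ∀ x : Fin n, m ≤ σ x → e < f x := by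
    intro x h
    by_contra hc
    have hlt : f x < e := lt_of_le_of_ne (not_lt.mp hc) (hfne x)
    exact absurd (hfa x hlt) (not_lt.mpr h)
  -- the left factor β
  obtain ⟨β, hβval⟩ : ∃ β : Fin n → Fin n,
      ∀ x, (β x).val = σ x + (if m ≤ σ x then 1 else 0) :=
    ⟨fun x => ⟨σ x + (if m ≤ σ x then 1 else 0), by
      have := hσle x
      split_ifs <;> omega⟩, fun _ => rfl⟩
  have hβmono : Monotone β := by
    intro x y h
    rw [Fin.le_def, hβval, hβval]
    have := hσmono x y h
    split_ifs <;> omega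
  have hβne : ∀ x, (β x).val ≠ m := by
    intro x
    rw [hβval]
    split_ifs <;> omega
  have hβub : ∀ x, (β x).val ≤ r + 1 := by
    intro x
    rw [hβval]
    have := hσle x
    split_ifs <;> omega
  have hσofβ : ∀ x y : Fin n, (β x).val = (β y).val → σ x = σ y := by
    intro x y h
    rw [hβval, hβval] at h
    split_ifs at h <;> omega
  have hfofβ : ∀ x y : Fin n, x ≤ y → (β x).val = (β y).val → f x = f y := by
    intro x y h hβ
    have h1 := hσofβ x y hβ
    have h2 := hρmono x y (hmono h)
    have h3 := hindmono x y h
    rw [hσdef x, hσdef y] at h1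
    apply hρeqf
    omega
  -- surjectivity of σ onto [0, r]
  obtain ⟨g, hg⟩ : ∃ g : ℕ → ℕ, ∀ i : ℕ,
      g i = if h : i < n then ρ ⟨i, h⟩ else 0 := ⟨_, fun _ => rfl⟩
  have hgeq : ∀ (i : ℕ) (h : i < n), g i = ρ ⟨i, h⟩ := by
    intro i h
    rw [hg i, dif_pos h]
  have hgstep : ∀ i, g (i+1) ≤ g i + 1 := by
    intro i
    by_cases h : i + 1 < n
    · rw [hgeq (i+1) h, hgeq i (by omega)]
      exact hρstep i h
    · rw [hg (i+1), dif_neg h]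
      omega
  have hσsurj : ∀ k : ℕ, k ≤ r → ∃ x : Fin n, σ x = k := by
    intro k hk
    by_cases hkt : k ≤ ρ x₀
    · have hg0 : g 0 = 0 := by
        rw [hgeq 0 (by omega)]
        exact hρ0
      have hgx₀ : g x₀.val = ρ x₀ := by
        rw [hgeq x₀.val x₀.isLt]
      obtain ⟨c, hc0, hcx, hgc⟩ := ivt_nat g hgstep 0 x₀.val k (Nat.zero_le _)
        (by omega) (by omega)
      have hcn : c < n := by have := x₀.isLt; omega
      refine ⟨⟨c, hcn⟩, ?_⟩
      have hρc : ρ ⟨c, hcn⟩ = k := by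
        rw [hgeq c hcn] at hgc
        exact hgc
      rw [hσdef]
      have hind0 : ¬(x₀ < (⟨c, hcn⟩ : Fin n) ∧ f x₀ ≤ f ⟨c, hcn⟩) := by
        rintro ⟨h1, -⟩
        rw [Fin.lt_def] at h1
        simp only [Fin.val_mk] at h1
        omega
      rw [if_neg hind0]
      omega
    · push_neg at hkt
      have hgx₁ : g (x₀.val + 1) = ρ x₀ := by
        rw [hgeq (x₀.val + 1) hx₀n]
        exact hρcongr _ _ hx₀.symm
      have hglast : g (n-1) = r - 1 := by
        rw [hgeq (n-1) (by omega)]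
        exact hρlast
      obtain ⟨c, hc0, hcx, hgc⟩ := ivt_nat g hgstep (x₀.val + 1) (n-1) (k-1)
        (by omega) (by omega) (by have := hρltr x₀; omega)
      have hcn : c < n := by omega
      refine ⟨⟨c, hcn⟩, ?_⟩
      have hρc : ρ ⟨c, hcn⟩ = k - 1 := by
        rw [hgeq c hcn] at hgc
        exact hgc
      have hfle : f x₀ ≤ f ⟨c, hcn⟩ := by
        by_contra hc2
        have := hρlt _ _ (not_le.mp hc2)
        omega
      rw [hσdef]
      rw [if_pos ⟨by rw [Fin.lt_def]; simp only [Fin.val_mk]; omega, hfle⟩]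
      omega
  -- range of β
  obtain ⟨B, hBdef⟩ : ∃ B : Finset (Fin n),
      B = Finset.univ.filter (fun v => v.val ≤ r + 1 ∧ v.val ≠ m) := ⟨_, rfl⟩
  have hBmem : ∀ v : Fin n, v ∈ B ↔ (v.val ≤ r + 1 ∧ v.val ≠ m) := by
    intro v
    rw [hBdef, Finset.mem_filter]
    simp
  have hβrange : Set.range β = ↑B := by
    ext v
    rw [Set.mem_range, Finset.mem_coe, hBmem]
    constructor
    · rintro ⟨x, rfl⟩
      exact ⟨hβub x, hβne x⟩
    · rintro ⟨h1, h2⟩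
      rcases lt_or_gt_of_ne h2 with h3 | h3
      · obtain ⟨x, hx⟩ := hσsurj v.val (by omega)
        refine ⟨x, Fin.ext ?_⟩
        rw [hβval, hx, if_neg (by omega)]
        omega
      · obtain ⟨x, hx⟩ := hσsurj (v.val - 1) (by omega)
        refine ⟨x, Fin.ext ?_⟩
        rw [hβval, hx, if_pos (by omega)]
        omega
  have hBcard : B.card = r + 1 := by
    have hBfull : (Finset.univ.filter (fun v : Fin n => v.val ≤ r + 1)) =
        Finset.Iic (⟨r+1, hr1n⟩ : Fin n) := by
      ext v
      rw [Finset.mem_filter, Finset.mem_Iic, Fin.le_def]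
      simp
    have hmem : (⟨m, by omega⟩ : Fin n) ∈
        Finset.univ.filter (fun v : Fin n => v.val ≤ r + 1) := by
      rw [Finset.mem_filter]
      exact ⟨Finset.mem_univ _, hmle⟩
    have hB : B = (Finset.univ.filter (fun v : Fin n => v.val ≤ r + 1)).erase ⟨m, by omega⟩ := by
      ext v
      rw [hBmem, Finset.mem_erase, Finset.mem_filter]
      constructor
      · rintro ⟨h1, h2⟩
        exact ⟨fun h => h2 (by rw [h]), Finset.mem_univ _, h1⟩
      · rintro ⟨h1, -, h2⟩
        exact ⟨h2, fun h => h1 (Fin.ext h)⟩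
    rw [hB, Finset.card_erase_of_mem hmem, hBfull, Fin.card_Iic]
    simp
  -- the right factor δ
  have hβ0 : (β ⟨0, by omega⟩).val = (if m = 0 then 1 else 0) := by
    have hσ0 : σ ⟨0, by omega⟩ = 0 := by
      rw [hσdef, hρ0]
      rw [if_neg]
      rintro ⟨h1, -⟩
      rw [Fin.lt_def] at h1
      simp only [Fin.val_mk] at h1
      omega
    rw [hβval, hσ0]
    by_cases h : m = 0
    · rw [if_pos h, if_pos (by omega)]
    · rw [if_neg h, if_neg (by omega)]
  have hXne : ∀ j : ℕ, j ≠ m → (Finset.univ.filter (fun x => (β x).val ≤ j)).Nonempty := by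
    intro j hj
    refine ⟨⟨0, by omega⟩, ?_⟩
    rw [Finset.mem_filter]
    refine ⟨Finset.mem_univ _, ?_⟩
    rw [hβ0]
    split_ifs with h
    · omega
    · omega
  obtain ⟨δ, hδdef⟩ : ∃ δ : Fin n → Fin n, ∀ y : Fin n,
      δ y = if hj : min y.val (r+1) = m then e
        else f ((Finset.univ.filter (fun x => (β x).val ≤ min y.val (r+1))).max' (hXne _ hj)) :=
    ⟨_, fun _ => rfl⟩
  -- the maximum selector
  have hdval : ∀ (j : ℕ) (hne : (Finset.univ.filter (fun x => (β x).val ≤ j)).Nonempty)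
      (x : Fin n), (β x).val = j →
      f ((Finset.univ.filter (fun x => (β x).val ≤ j)).max' hne) = f x := by
    intro j hne x hx
    set x' := (Finset.univ.filter (fun x => (β x).val ≤ j)).max' hne with hx'def
    have hx'mem : (β x').val ≤ j := by
      have := Finset.max'_mem _ hne
      rw [Finset.mem_filter] at this
      exact this.2
    have hxle : x ≤ x' := by
      apply Finset.le_max'
      rw [Finset.mem_filter]
      exact ⟨Finset.mem_univ _, le_of_eq hx⟩
    have : (β x).val = (β x').val := by
      have := Fin.le_def.mp (hβmono hxle)
      omega
    exact (hfofβ x x' hxle this).symm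
  have hdlt : ∀ (j : ℕ) (hne : (Finset.univ.filter (fun x => (β x).val ≤ j)).Nonempty),
      j < m → f ((Finset.univ.filter (fun x => (β x).val ≤ j)).max' hne) < e := by
    intro j hne hjm
    set x' := (Finset.univ.filter (fun x => (β x).val ≤ j)).max' hne with hx'def
    have hx'mem : (β x').val ≤ j := by
      have := Finset.max'_mem _ hne
      rw [Finset.mem_filter] at this
      exact this.2
    apply hfa'
    have := hβval x'
    split_ifs at this <;> omega
  have hdge : ∀ (j : ℕ) (hne : (Finset.univ.filter (fun x => (β x).val ≤ j)).Nonempty),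
      m < j → j ≤ r + 1 → e < f ((Finset.univ.filter (fun x => (β x).val ≤ j)).max' hne) := by
    intro j hne hjm hjr
    set x' := (Finset.univ.filter (fun x => (β x).val ≤ j)).max' hne with hx'def
    obtain ⟨x, hx⟩ := hσsurj m (by omega)
    have hβx : (β x).val = m + 1 := by
      rw [hβval, hx, if_pos le_rfl]
    have hxmem : x ∈ Finset.univ.filter (fun x => (β x).val ≤ j) := by
      rw [Finset.mem_filter]
      exact ⟨Finset.mem_univ _, by omega⟩
    have hxle : x ≤ x' := Finset.le_max' _ x hxmem
    have hββ : (β x).val ≤ (β x').val := Fin.le_def.mp (hβmono hxle)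
    apply hfb'
    have h1 := hβval x'
    split_ifs at h1 <;> omega
  -- composing gives back f
  have hcomp : ∀ x : Fin n, δ (β x) = f x := by
    intro x
    have hmin : min (β x).val (r+1) = (β x).val := min_eq_left (hβub x)
    have hne' : min (β x).val (r+1) ≠ m := by
      rw [hmin]; exact hβne x
    rw [hδdef, dif_neg hne']
    exact hdval _ _ x hmin.symm
  -- monotonicity of δ
  have hδmono : Monotone δ := by
    intro y y' hyy'
    have hjj' : min y.val (r+1) ≤ min y'.val (r+1) := by
      have := Fin.le_def.mp hyy'
      omega
    rw [hδdef y, hδdef y']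
    by_cases h1 : min y.val (r+1) = m <;> by_cases h2 : min y'.val (r+1) = m
    · rw [dif_pos h1, dif_pos h2]
    · rw [dif_pos h1, dif_neg h2]
      exact le_of_lt (hdge _ _ (by omega) (min_le_right _ _))
    · rw [dif_neg h1, dif_pos h2]
      exact le_of_lt (hdlt _ _ (by omega))
    · rw [dif_neg h1, dif_neg h2]
      apply hmono
      apply Finset.le_max'
      rw [Finset.mem_filter]
      refine ⟨Finset.mem_univ _, ?_⟩
      have := Finset.max'_mem _ (hXne _ h1)
      rw [Finset.mem_filter] at this
      omega
  -- range of δ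
  have hδrange : Set.range δ = ↑(insert e A) := by
    ext v
    rw [Set.mem_range, Finset.coe_insert, Set.mem_insert_iff, Finset.mem_coe]
    constructor
    · rintro ⟨y, rfl⟩
      rw [hδdef]
      by_cases hj : min y.val (r+1) = m
      · rw [dif_pos hj]
        exact Or.inl rfl
      · rw [dif_neg hj]
        exact Or.inr (hmemA _)
    · rintro (rfl | hv)
      · refine ⟨⟨m, by omega⟩, ?_⟩
        rw [hδdef, dif_pos (by simp only [Fin.val_mk]; omega)]
      · obtain ⟨x, rfl⟩ := hAmem v hv
        exact ⟨β x, hcomp x⟩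
  have hδcard : (insert e A).card = r + 1 := by
    rw [Finset.card_insert_of_notMem he, hAcard]
  -- non-bijectivity
  have hnbijβ : ¬ Function.Bijective β := by
    intro hb
    have h1 : Set.range β = Set.univ := hb.2.range_eq
    rw [hβrange] at h1
    have h2 : B = Finset.univ := Finset.coe_injective (by rw [h1]; simp)
    rw [h2, Finset.card_univ, Fintype.card_fin] at hBcard
    omega
  have hnbijδ : ¬ Function.Bijective δ := by
    intro hb
    have h1 : Set.range δ = Set.univ := hb.2.range_eq
    rw [hδrange] at h1
    have h2 : insert e A = Finset.univ := Finset.coe_injective (by rw [h1]; simp)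
    rw [h2, Finset.card_univ, Fintype.card_fin] at hδcard
    omega
  -- conclusion
  refine ⟨⟨β, hβmono, hnbijβ⟩, ⟨δ, hδmono, hnbijδ⟩, ?_, ?_, ?_⟩
  · show (Set.range β).ncard = r + 1
    rw [hβrange, Set.ncard_coe_finset, hBcard]
  · show (Set.range δ).ncard = r + 1
    rw [hδrange, Set.ncard_coe_finset, hδcard]
  · exact Subtype.ext (funext fun x => (hcomp x).symm)
end

section
/- For n ≥ 3, every prime subset of the semigroup 𝒪_n contains at least n − 1 elements. -/
set_option maxHeartbeats 1000000

namespace OSAux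

/-- collapse `{j, j+1}` to `j`, then skip the value `k`. -/
def gf (j k x : ℕ) : ℕ :=
  if (if x ≤ j then x else x - 1) < k then (if x ≤ j then x else x - 1)
  else (if x ≤ j then x else x - 1) + 1

lemma gf_lt {m j k x : ℕ} (hj : j < m) (hx : x < m + 1) : gf j k x < m + 1 := by
  simp only [gf]; split_ifs <;> omega

lemma gf_mono {j k x y : ℕ} (h : x ≤ y) : gf j k x ≤ gf j k y := by
  simp only [gf]; split_ifs <;> omega

lemma gf_ne {j k x : ℕ} : gf j k x ≠ k := by
  simp only [gf]; split_ifs <;> omega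

lemma gf_surj {m j k y : ℕ} (hj : j < m) (hy : y < m + 1) (hyk : y ≠ k) (hk : k < m + 1) :
    ∃ x < m + 1, gf j k x = y := by
  refine ⟨(if (if y < k then y else y - 1) ≤ j then (if y < k then y else y - 1)
    else (if y < k then y else y - 1) + 1), by split_ifs <;> omega, ?_⟩
  simp only [gf]; split_ifs <;> omega

lemma gf_comp {i j k k0 x : ℕ} (hk : k = j ∨ k = j + 1) :
    gf j k0 (gf i k x) = gf i k0 x := by
  simp only [gf]; split_ifs <;> omega

def OSmk {n : ℕ} (f : Fin n → Fin n) (h1 : Monotone f) (h2 : ¬ Function.Bijective f) :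
    OrderSing n := ⟨f, h1, h2⟩

def Gos {m : ℕ} (j : Fin m) (k : Fin (m+1)) : OrderSing (m+1) :=
  ⟨fun x => ⟨gf j.1 k.1 x.1, gf_lt j.2 x.2⟩,
   fun x y h => gf_mono h,
   fun hb => by
     obtain ⟨x, hx⟩ := hb.2 k
     exact gf_ne (congrArg Fin.val hx)⟩

lemma Gos_val {m : ℕ} (j : Fin m) (k : Fin (m+1)) (x : Fin (m+1)) :
    ((Gos j k).1 x).1 = gf j.1 k.1 x.1 := rfl

lemma mul_val {n : ℕ} (f g : OrderSing n) : (f * g).1 = g.1 ∘ f.1 := rfl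

lemma Gos_mul {m : ℕ} (i j : Fin m) (k k0 : Fin (m+1))
    (hk : k.1 = j.1 ∨ k.1 = j.1 + 1) :
    Gos i k * Gos j k0 = Gos i k0 := by
  apply Subtype.ext
  rw [mul_val]
  funext x
  apply Fin.ext
  exact gf_comp hk

lemma Gos_param_inj {m : ℕ} {i j : Fin m} {k k0 : Fin (m+1)}
    (h : Gos i k = Gos j k0) : i = j ∧ k = k0 := by
  have hf : ∀ x : Fin (m+1), gf i.1 k.1 x.1 = gf j.1 k0.1 x.1 := by
    intro x
    exact congrArg Fin.val (congrFun (congrArg Subtype.val h) x)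
  have hkk : k = k0 := by
    by_contra hne
    have hne' : k0.1 ≠ k.1 := fun h' => hne (Fin.ext h'.symm)
    obtain ⟨x, hx, hgx⟩ := gf_surj (m := m) i.2 k0.2 hne' k.2
    have := hf ⟨x, hx⟩
    simp only at this
    rw [hgx] at this
    exact gf_ne this.symm
  refine ⟨?_, hkk⟩
  subst hkk
  by_contra hne
  have hne' : i.1 ≠ j.1 := fun h' => hne (Fin.ext h')
  rcases Nat.lt_or_ge i.1 j.1 with hlt | hge
  · have hx : i.1 + 1 < m + 1 := by omega
    have := hf ⟨i.1 + 1, hx⟩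
    simp only [gf] at this
    split_ifs at this <;> omega
  · have hlt : j.1 < i.1 := by omega
    have hx : j.1 + 1 < m + 1 := by omega
    have := hf ⟨j.1 + 1, hx⟩
    simp only [gf] at this
    split_ifs at this <;> omega


lemma le_self_strictMono {N : ℕ} (f : Fin N → Fin N) (hf : StrictMono f) :
    ∀ x : Fin N, x.1 ≤ (f x).1 := by
  have H : ∀ v : ℕ, ∀ x : Fin N, x.1 = v → v ≤ (f x).1 := by
    intro v
    induction v with
    | zero => intro x _; omega
    | succ v ih =>
      intro x hx
      have hv : v < N := by omega
      have h1 := ih ⟨v, hv⟩ rfl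
      have h2 : f ⟨v, hv⟩ < f x := hf (by rw [Fin.lt_def]; simp; omega)
      rw [Fin.lt_def] at h2
      omega
  exact fun x => H x.1 x rfl

lemma mono_bij_id {N : ℕ} (f : Fin N → Fin N) (hm : Monotone f)
    (hb : Function.Bijective f) : ∀ x, f x = x := by
  have hsm : StrictMono f := hm.strictMono_of_injective hb.1
  have h : f = id := by
    apply (hsm.range_inj strictMono_id).1
    rw [Set.range_eq_univ.2 hb.2, Set.range_id]
  intro x; rw [h]; rfl

lemma exists_dup {m : ℕ} (u : Fin (m+1) → Fin (m+1)) (hmono : Monotone u)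
    (hninj : ¬ Function.Injective u) :
    ∃ i0 : Fin (m+1), ∃ h : i0.1 < m, u i0 = u ⟨i0.1 + 1, by omega⟩ := by
  simp only [Function.Injective, not_forall] at hninj
  obtain ⟨x, y, hxy, hne⟩ := hninj
  rcases Nat.lt_or_ge x.1 y.1 with hlt | hge
  · refine ⟨x, by omega, ?_⟩
    apply le_antisymm (hmono (by simp [Fin.le_def]))
    calc u ⟨x.1+1, by omega⟩ ≤ u y := hmono (by simp [Fin.le_def]; omega)
    _ = u x := hxy.symm
  · have hlt : y.1 < x.1 := by
      rcases Nat.lt_or_ge y.1 x.1 with h | h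
      · exact h
      · exact absurd (Fin.ext (le_antisymm h hge)) hne
    refine ⟨y, by omega, ?_⟩
    apply le_antisymm (hmono (by simp [Fin.le_def]))
    calc u ⟨y.1+1, by omega⟩ ≤ u x := hmono (by simp [Fin.le_def]; omega)
    _ = u y := hxy

lemma rank_le {m : ℕ} (u : Fin (m+1) → Fin (m+1)) (c : Fin (m+1))
    (hc : ∀ x, u x ≠ c) : (Finset.univ.image u).card ≤ m := by
  have h : Finset.univ.image u ⊂ Finset.univ := by
    refine Finset.ssubset_univ_iff.mpr (fun he => ?_)
    have hc' : c ∈ Finset.univ.image u := by rw [he]; exact Finset.mem_univ c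
    obtain ⟨x, _, hx⟩ := Finset.mem_image.mp hc'
    exact hc x hx
  have h2 := Finset.card_lt_card h
  have h3 : (Finset.univ : Finset (Fin (m+1))).card = m + 1 := by simp
  omega
lemma step {m : ℕ} (u : Fin (m+1) → Fin (m+1)) (hmono : Monotone u)
    (i0 i1 : Fin (m+1)) (hi0 : i0.1 < m) (hi1 : i1.1 = i0.1 + 1) (hdup : u i0 = u i1)
    (c : Fin (m+1)) (hc : ∀ x, u x ≠ c) :
    ∃ (a : Fin (m+1) → Fin (m+1)) (j : Fin m), Monotone a ∧
      (∀ x, gf j.1 c.1 (a x).1 = (u x).1) ∧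
      (Finset.univ.image u).card < (Finset.univ.image a).card := by
  have hcv : ∀ x, (u x).1 ≠ c.1 := fun x h => hc x (Fin.ext h)
  have hdv : (u i1).1 = (u i0).1 := congrArg Fin.val hdup.symm
  have hup : ∀ x : Fin (m+1), i0.1 < x.1 → (u i0).1 ≤ (u x).1 := by
    intro x hx
    have : u i1 ≤ u x := hmono (by rw [Fin.le_def]; omega)
    rw [Fin.le_def] at this; omega
  have hdn : ∀ x : Fin (m+1), x.1 ≤ i0.1 → (u x).1 ≤ (u i0).1 := by
    intro x hx
    have : u x ≤ u i0 := hmono (by rw [Fin.le_def]; omega)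
    rw [Fin.le_def] at this; exact this
  have hcb := c.2
  have hub := (u i0).2
  rcases Nat.lt_or_ge (u i0).1 c.1 with hui | hge
  · -- case up : u i0 < c
    refine ⟨fun x => ⟨(u x).1 + (if i0.1 < x.1 ∧ (u x).1 < c.1 then 1 else 0), by
        have := (u x).2; split_ifs <;> omega⟩,
      ⟨(u i0).1, by omega⟩, ?_, ?_, ?_⟩
    · intro x y hxy
      have hxyv : x.1 ≤ y.1 := hxy
      have huv : (u x).1 ≤ (u y).1 := hmono hxy
      have hx' := hcv x; have hy' := hcv y
      simp only [Fin.mk_le_mk]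
      split_ifs <;> omega
    · intro x
      rcases Nat.lt_or_ge i0.1 x.1 with h | h
      · have key := hup x h
        have := hcv x
        simp only [gf]
        split_ifs <;> omega
      · have key := hdn x h
        have := hcv x
        simp only [gf]
        split_ifs <;> omega
    · -- cardinality
      set Mu := Finset.univ.image u with hMu
      set φ : Fin (m+1) → Fin (m+1) :=
        fun v => ⟨v.1 + (if (u i0).1 < v.1 ∧ v.1 < c.1 then 1 else 0), by
          have := v.2; split_ifs <;> omega⟩ with hφ
      set extra : Fin (m+1) := ⟨(u i0).1 + 1, by omega⟩ with hextra
      have hsub : insert extra (Mu.image φ) ⊆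
          Finset.univ.image (fun x => (⟨(u x).1 + (if i0.1 < x.1 ∧ (u x).1 < c.1 then 1 else 0), by
            have := (u x).2; split_ifs <;> omega⟩ : Fin (m+1))) := by
        intro z hz
        rcases Finset.mem_insert.mp hz with hz | hz
        · refine Finset.mem_image.mpr ⟨i1, Finset.mem_univ _, ?_⟩
          subst hz
          apply Fin.ext
          simp only [hextra]
          rw [if_pos ⟨by omega, by omega⟩]
          omega
        · obtain ⟨v, hvMu, rfl⟩ := Finset.mem_image.mp hz
          obtain ⟨y, _, rfl⟩ := Finset.mem_image.mp hvMu
          rcases Nat.lt_or_ge i0.1 y.1 with h | h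
          · have key := hup y h
            rcases Nat.lt_or_ge (u i0).1 (u y).1 with h2 | h2
            · refine Finset.mem_image.mpr ⟨y, Finset.mem_univ _, ?_⟩
              apply Fin.ext
              simp only [hφ]
              by_cases h3 : (u y).1 < c.1
              · rw [if_pos ⟨h, h3⟩, if_pos ⟨h2, h3⟩]
              · rw [if_neg (fun hco => h3 hco.2), if_neg (fun hco => h3 hco.2)]
            · refine Finset.mem_image.mpr ⟨i0, Finset.mem_univ _, ?_⟩
              apply Fin.ext
              simp only [hφ]
              rw [if_neg (fun hco => by omega), if_neg (fun hco => by omega)]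
              omega
          · have key := hdn y h
            refine Finset.mem_image.mpr ⟨y, Finset.mem_univ _, ?_⟩
            apply Fin.ext
            simp only [hφ]
            rw [if_neg (fun hco => by omega), if_neg (fun hco => by omega)]
      have hnot : extra ∉ Mu.image φ := by
        intro hmem
        obtain ⟨v, hvMu, hveq⟩ := Finset.mem_image.mp hmem
        obtain ⟨y, _, rfl⟩ := Finset.mem_image.mp hvMu
        have hq := congrArg Fin.val hveq
        simp only [hφ, hextra] at hq
        have hcy := hcv y
        split_ifs at hq <;> omega
      have hinj : Set.InjOn φ Mu := by
        intro v hv w hw heq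
        obtain ⟨y, _, rfl⟩ := Finset.mem_image.mp hv
        obtain ⟨y', _, rfl⟩ := Finset.mem_image.mp hw
        have hvq := congrArg Fin.val heq
        simp only [hφ] at hvq
        have hcy := hcv y; have hcy' := hcv y'
        apply Fin.ext
        split_ifs at hvq <;> omega
      have h1 : (Mu.image φ).card = Mu.card := Finset.card_image_of_injOn hinj
      have h2 := Finset.card_insert_of_notMem hnot
      have h3 := Finset.card_le_card hsub
      omega
  · -- case down : c < u i0
    have hui : c.1 < (u i0).1 := by have := hcv i0; omega
    refine ⟨fun x => ⟨(u x).1 - (if x.1 ≤ i0.1 ∧ c.1 < (u x).1 then 1 else 0), by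
        have := (u x).2; split_ifs <;> omega⟩,
      ⟨(u i0).1 - 1, by omega⟩, ?_, ?_, ?_⟩
    · intro x y hxy
      have hxyv : x.1 ≤ y.1 := hxy
      have huv : (u x).1 ≤ (u y).1 := hmono hxy
      have hx' := hcv x; have hy' := hcv y
      simp only [Fin.mk_le_mk]
      split_ifs <;> omega
    · intro x
      rcases Nat.lt_or_ge i0.1 x.1 with h | h
      · have key := hup x h
        have := hcv x
        simp only [gf]
        split_ifs <;> omega
      · have key := hdn x h
        have := hcv x
        simp only [gf]
        split_ifs <;> omega
    · set Mu := Finset.univ.image u with hMu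
      set φ : Fin (m+1) → Fin (m+1) :=
        fun v => ⟨v.1 - (if c.1 < v.1 ∧ v.1 < (u i0).1 then 1 else 0), by
          have := v.2; split_ifs <;> omega⟩ with hφ
      set extra : Fin (m+1) := ⟨(u i0).1 - 1, by omega⟩ with hextra
      have hsub : insert extra (Mu.image φ) ⊆
          Finset.univ.image (fun x => (⟨(u x).1 - (if x.1 ≤ i0.1 ∧ c.1 < (u x).1 then 1 else 0), by
            have := (u x).2; split_ifs <;> omega⟩ : Fin (m+1))) := by
        intro z hz
        rcases Finset.mem_insert.mp hz with hz | hz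
        · refine Finset.mem_image.mpr ⟨i0, Finset.mem_univ _, ?_⟩
          subst hz
          apply Fin.ext
          simp only [hextra]
          rw [if_pos ⟨le_refl _, hui⟩]
        · obtain ⟨v, hvMu, rfl⟩ := Finset.mem_image.mp hz
          obtain ⟨y, _, rfl⟩ := Finset.mem_image.mp hvMu
          rcases Nat.lt_or_ge i0.1 y.1 with h | h
          · have key := hup y h
            refine Finset.mem_image.mpr ⟨y, Finset.mem_univ _, ?_⟩
            apply Fin.ext
            simp only [hφ]
            rw [if_neg (fun hco => by omega), if_neg (fun hco => by omega)]
          · have key := hdn y h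
            rcases Nat.lt_or_ge (u y).1 (u i0).1 with h2 | h2
            · refine Finset.mem_image.mpr ⟨y, Finset.mem_univ _, ?_⟩
              apply Fin.ext
              simp only [hφ]
              by_cases h3 : c.1 < (u y).1
              · rw [if_pos ⟨h, h3⟩, if_pos ⟨h3, h2⟩]
              · rw [if_neg (fun hco => h3 hco.2), if_neg (fun hco => h3 hco.1)]
            · refine Finset.mem_image.mpr ⟨i1, Finset.mem_univ _, ?_⟩
              apply Fin.ext
              simp only [hφ]
              rw [if_neg (fun hco => by omega), if_neg (fun hco => by omega)]
              omega
      have hnot : extra ∉ Mu.image φ := by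
        intro hmem
        obtain ⟨v, hvMu, hveq⟩ := Finset.mem_image.mp hmem
        obtain ⟨y, _, rfl⟩ := Finset.mem_image.mp hvMu
        have hq := congrArg Fin.val hveq
        simp only [hφ, hextra] at hq
        have hcy := hcv y
        split_ifs at hq <;> omega
      have hinj : Set.InjOn φ Mu := by
        intro v hv w hw heq
        obtain ⟨y, _, rfl⟩ := Finset.mem_image.mp hv
        obtain ⟨y', _, rfl⟩ := Finset.mem_image.mp hw
        have hvq := congrArg Fin.val heq
        simp only [hφ] at hvq
        have hcy := hcv y; have hcy' := hcv y'
        apply Fin.ext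
        split_ifs at hvq <;> omega
      have h1 : (Mu.image φ).card = Mu.card := Finset.card_image_of_injOn hinj
      have h2 := Finset.card_insert_of_notMem hnot
      have h3 := Finset.card_le_card hsub
      omega


lemma exists_Gos_mem {m : ℕ} (U : Set (OrderSing (m+1))) (hU : IsPrimeSubset U) :
    ∃ (j : Fin m) (k : Fin (m+1)), Gos j k ∈ U := by
  suffices H : ∀ N (u : OrderSing (m+1)), u ∈ U →
      m + 1 - (Finset.univ.image u.1).card ≤ N → ∃ j k, Gos j k ∈ U by
    obtain ⟨u0, hu0⟩ := hU.1
    exact H (m+1) u0 hu0 (by omega)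
  intro N
  induction N with
  | zero =>
    intro u hu hle
    exfalso
    have hns : ¬ Function.Surjective u.1 :=
      fun hs => u.2.2 ((Finite.surjective_iff_bijective).mp hs)
    rw [Function.Surjective] at hns; push_neg at hns
    obtain ⟨c, hcne⟩ := hns
    have := rank_le u.1 c hcne
    omega
  | succ N ih =>
    intro u hu hle
    have hns : ¬ Function.Surjective u.1 :=
      fun hs => u.2.2 ((Finite.surjective_iff_bijective).mp hs)
    have hni : ¬ Function.Injective u.1 :=
      fun hs => u.2.2 ((Finite.injective_iff_bijective).mp hs)
    rw [Function.Surjective] at hns; push_neg at hns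
    obtain ⟨c, hcne⟩ := hns
    obtain ⟨i0, hi0, hdup⟩ := exists_dup u.1 u.2.1 hni
    obtain ⟨a, j, hamono, hab, hcard⟩ :=
      step u.1 u.2.1 i0 ⟨i0.1+1, by omega⟩ hi0 rfl hdup c hcne
    by_cases hbij : Function.Bijective a
    · have hid := mono_bij_id a hamono hbij
      refine ⟨j, c, ?_⟩
      have hu' : u = Gos j c := by
        apply Subtype.ext; funext x
        apply Fin.ext
        rw [Gos_val, ← hab x, hid x]
      rwa [← hu']
    · have hmul : OSmk a hamono hbij * Gos j c = u := by
        apply Subtype.ext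
        rw [mul_val]
        funext x
        apply Fin.ext
        exact hab x
      rcases hU.2 _ _ (by rwa [hmul]) with hA | hG
      · exact ih (OSmk a hamono hbij) hA (by simp only [OSmk] at hcard ⊢; omega)
      · exact ⟨j, c, hG⟩

end OSAux

open OSAux in
instance OrderSing.instFinite (n : ℕ) : Finite (OrderSing n) := by
  unfold OrderSing; infer_instance


open OSAux Finset in
/-- For `n ≥ 3`, every prime subset of the semigroup `𝒪ₙ` of order-preserving
singular selfmaps of `[n]` contains at least `n - 1` elements. -/
theorem orderSing_prime_subset_card_lower_bound (n : ℕ) (hn : 3 ≤ n)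
    (U : Set (OrderSing n)) (hU : IsPrimeSubset U) :
    n - 1 ≤ U.ncard := by
  classical
  obtain ⟨m, rfl⟩ : ∃ m, n = m + 1 := ⟨n - 1, by omega⟩
  obtain ⟨i0, k0, hG⟩ := exists_Gos_mem U hU
  set P : Finset (Fin (m+1)) := Finset.univ.filter (fun k => Gos i0 k ∈ U) with hP
  set Q : Finset (Fin m) := Finset.univ.filter (fun j => Gos j k0 ∈ U) with hQ
  have hk0P : k0 ∈ P := Finset.mem_filter.mpr ⟨Finset.mem_univ _, hG⟩
  have hforce : ∀ j : Fin m, j ∉ Q → ∀ kv : Fin (m+1),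
      kv.1 = j.1 ∨ kv.1 = j.1 + 1 → kv ∈ P := by
    intro j hjQ kv hkv
    have hmul := Gos_mul i0 j kv k0 hkv
    rcases hU.2 _ _ (by rwa [hmul]) with h | h
    · exact Finset.mem_filter.mpr ⟨Finset.mem_univ _, h⟩
    · exact absurd (show j ∈ Q from Finset.mem_filter.mpr ⟨Finset.mem_univ _, h⟩) hjQ
  have hQle : Q.card ≤ m := by
    have := Finset.card_le_card (Finset.subset_univ Q)
    simpa using this
  have hPQ : m + 1 ≤ P.card + Q.card := by
    by_cases hQu : Q = Finset.univ
    · have h1 : Q.card = m := by rw [hQu]; simp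
      have h2 : 1 ≤ P.card := Finset.card_pos.mpr ⟨k0, hk0P⟩
      omega
    · have hQc : (Finset.univ \ Q).Nonempty := by
        rw [Finset.sdiff_nonempty]
        exact fun h => hQu (Finset.univ_subset_iff.mp h)
      set ι : Fin m → Fin (m+1) := fun j => ⟨j.1, by omega⟩ with hι
      set jm := (Finset.univ \ Q).max' hQc with hjm
      set em : Fin (m+1) := ⟨jm.1 + 1, by omega⟩ with hem
      have hjmQ : jm ∉ Q := by
        have h := Finset.max'_mem _ hQc
        rw [← hjm] at h
        exact (Finset.mem_sdiff.mp h).2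
      have hsub : insert em ((Finset.univ \ Q).image ι) ⊆ P := by
        intro z hz
        rcases Finset.mem_insert.mp hz with hz | hz
        · subst hz
          exact hforce jm hjmQ _ (Or.inr rfl)
        · obtain ⟨j, hjmem, rfl⟩ := Finset.mem_image.mp hz
          exact hforce j (fun hc => (Finset.mem_sdiff.mp hjmem).2 hc) _ (Or.inl rfl)
      have hnm : em ∉ (Finset.univ \ Q).image ι := by
        intro hmem
        obtain ⟨j, hjmem, hjeq⟩ := Finset.mem_image.mp hmem
        have h1 : (ι j).1 = em.1 := congrArg Fin.val hjeq
        have h2 : j ≤ jm := Finset.le_max' _ j hjmem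
        rw [Fin.le_def] at h2
        simp only [hι, hem] at h1
        omega
      have hinjc : Set.InjOn ι ↑(Finset.univ \ Q) := by
        intro j _ j' _ h
        have h2 : (ι j).1 = (ι j').1 := congrArg Fin.val h
        simp only [hι] at h2
        exact Fin.ext h2
      have h1 := Finset.card_insert_of_notMem hnm
      have h2 := Finset.card_image_of_injOn hinjc
      have h3 := Finset.card_le_card hsub
      have h4 : (Finset.univ \ Q).card = m - Q.card := by
        rw [Finset.card_sdiff_of_subset (Finset.subset_univ Q)]
        simp
      omega
  set A : Finset (OrderSing (m+1)) := P.image (fun k => Gos i0 k) with hA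
  set B : Finset (OrderSing (m+1)) := Q.image (fun j => Gos j k0) with hB
  have hSsub : ((A ∪ B : Finset (OrderSing (m+1))) : Set (OrderSing (m+1))) ⊆ U := by
    intro z hz
    rcases Finset.mem_union.mp (Finset.mem_coe.mp hz) with hz | hz
    · obtain ⟨k, hk, rfl⟩ := Finset.mem_image.mp hz
      exact (Finset.mem_filter.mp hk).2
    · obtain ⟨j, hj, rfl⟩ := Finset.mem_image.mp hz
      exact (Finset.mem_filter.mp hj).2
  have hcardA : A.card = P.card :=
    Finset.card_image_of_injective P (fun k k' h => (Gos_param_inj h).2)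
  have hcardB : B.card = Q.card :=
    Finset.card_image_of_injective Q (fun j j' h => (Gos_param_inj h).1)
  have hinter : A ∩ B ⊆ {Gos i0 k0} := by
    intro z hz
    obtain ⟨hzA, hzB⟩ := Finset.mem_inter.mp hz
    obtain ⟨k, _, rfl⟩ := Finset.mem_image.mp hzA
    obtain ⟨j, _, hj⟩ := Finset.mem_image.mp hzB
    obtain ⟨hj1, hj2⟩ := Gos_param_inj hj
    rw [Finset.mem_singleton, ← hj2]
  have hic : (A ∩ B).card ≤ 1 := by
    have := Finset.card_le_card hinter
    simpa using this
  have huc := Finset.card_union_add_card_inter A B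
  have hUcard : (A ∪ B).card ≤ U.ncard := by
    rw [← Set.ncard_coe_finset (A ∪ B)]
    exact Set.ncard_le_ncard hSsub (Set.toFinite U)
  omega
end

section
/- For n ≥ 3 and any fixed q ∈ [n], the set V = {ζ_{(i, q)} : i ∈ [n − 1]} is a prime subset of 𝒪_n of cardinality n − 1. -/

def zb (i x : ℕ) : ℕ := if x ≤ i then x else x - 1
def zv (q b : ℕ) : ℕ := if b < q then b else b + 1

def zfun (n i q : ℕ) (x : Fin n) : Fin n :=
  if h : zv q (zb i x.val) < n then ⟨zv q (zb i x.val), h⟩ else x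

lemma zv_lt {n i q x : ℕ} (hi : i + 1 < n) (hq : q < n) (hx : x < n) :
    zv q (zb i x) < n := by
  simp only [zv, zb]; split_ifs <;> omega

lemma zfun_val {n i q : ℕ} (hi : i + 1 < n) (hq : q < n) (x : Fin n) :
    (zfun n i q x).val = zv q (zb i x.val) := by
  rw [zfun, dif_pos (zv_lt hi hq x.isLt)]

lemma zfun_mono {n i q : ℕ} (hi : i + 1 < n) (hq : q < n) : Monotone (zfun n i q) := by
  intro x y hxy
  rw [Fin.le_def, zfun_val hi hq, zfun_val hi hq]
  have := Fin.le_def.mp hxy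
  simp only [zv, zb]
  split_ifs <;> omega

lemma zfun_ker {n i q : ℕ} (hi : i + 1 < n) (hq : q < n) (x y : Fin n) :
    zfun n i q x = zfun n i q y ↔
      (x = y ∨ ((x.val = i ∨ x.val = i + 1) ∧ (y.val = i ∨ y.val = i + 1))) := by
  have hx := x.isLt; have hy := y.isLt
  rw [Fin.ext_iff, zfun_val hi hq, zfun_val hi hq, Fin.ext_iff]
  simp only [zv, zb]
  split_ifs <;> omega

lemma zfun_range {n i q : ℕ} (hi : i + 1 < n) (hq : q < n) :
    Set.range (zfun n i q) = {y : Fin n | (y : ℕ) ≠ q} := by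
  ext w
  simp only [Set.mem_range, Set.mem_setOf_eq]
  constructor
  · rintro ⟨x, rfl⟩
    rw [zfun_val hi hq]
    simp only [zv, zb]; split_ifs <;> omega
  · intro hw
    have hwn := w.isLt
    rcases Nat.lt_or_ge w.val q with h | h
    · exact ⟨⟨if w.val ≤ i then w.val else w.val + 1, by split_ifs <;> omega⟩,
        Fin.ext (by rw [zfun_val hi hq]; simp only [zv, zb]; split_ifs <;> omega)⟩
    · have h' : q < w.val := lt_of_le_of_ne h (Ne.symm hw)
      exact ⟨⟨if w.val - 1 ≤ i then w.val - 1 else w.val, by split_ifs <;> omega⟩,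
        Fin.ext (by rw [zfun_val hi hq]; simp only [zv, zb]; split_ifs <;> omega)⟩

lemma mono_unique_s14 {n : ℕ} {f z : Fin n → Fin n} (hf : Monotone f) (hz : Monotone z)
    (hker : ∀ x y, f x = f y ↔ z x = z y) (hr : Set.range f = Set.range z) : f = z := by
  have step : ∀ x : Fin n, (∀ y : Fin n, y < x → f y = z y) → f x = z x := by
    intro x ih
    by_cases hcase : ∃ y : Fin n, y < x ∧ f y = f x
    · obtain ⟨y, hy, hfy⟩ := hcase
      have hzy : z y = z x := (hker y x).mp hfy
      rw [← hfy, ← hzy]; exact ih y hy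
    · push_neg at hcase
      have hz' : ∀ y : Fin n, y < x → z y ≠ z x := fun y hy h => hcase y hy ((hker y x).mpr h)
      rcases lt_trichotomy (f x) (z x) with h | h | h
      · exfalso
        have hm : f x ∈ Set.range z := by rw [← hr]; exact Set.mem_range_self x
        obtain ⟨w, hw⟩ := hm
        have hwx : w < x := by
          rcases lt_trichotomy w x with h1 | h1 | h1
          · exact h1
          · exfalso; rw [h1] at hw; exact absurd hw h.ne'
          · exfalso
            have h2 : z x ≤ z w := hz h1.le
            rw [hw] at h2
            exact absurd h (not_lt.mpr h2)
        have hfw : f w = z w := ih w hwx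
        exact hcase w hwx (by rw [hfw, hw])
      · exact h
      · exfalso
        have hm : z x ∈ Set.range f := by rw [hr]; exact Set.mem_range_self x
        obtain ⟨u, hu⟩ := hm
        have hux : u < x := by
          rcases lt_trichotomy u x with h1 | h1 | h1
          · exact h1
          · exfalso; rw [h1] at hu; exact absurd hu h.ne'
          · exfalso
            have h2 : f x ≤ f u := hf h1.le
            rw [hu] at h2
            exact absurd h (not_lt.mpr h2)
        have hfu : f u = z u := ih u hux
        rw [hfu] at hu
        exact hz' u hux hu
  have H : ∀ m : ℕ, ∀ x : Fin n, x.val ≤ m → f x = z x := by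
    intro m
    induction m with
    | zero =>
      intro x hx
      exact step x (fun y hy => absurd (Fin.lt_def.mp hy) (by omega))
    | succ m ih =>
      intro x _
      exact step x (fun y hy => ih y (by have := Fin.lt_def.mp hy; omega))
  funext x
  exact H x.val x le_rfl

lemma two_collapse {n : ℕ} {g : Fin n → Fin n} {p r : ℕ} (hp : p + 1 < n) (hr : r + 1 < n)
    (hpr : p < r)
    (h1 : g ⟨p, by omega⟩ = g ⟨p + 1, hp⟩)
    (h2 : g ⟨r, by omega⟩ = g ⟨r + 1, hr⟩) :
    (Finset.univ.image g).card ≤ n - 2 := by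
  have hsub : Finset.univ.image g ⊆ ((Finset.univ.erase ⟨p+1, hp⟩).erase ⟨r+1, hr⟩).image g := by
    intro v hv
    rw [Finset.mem_image] at hv ⊢
    obtain ⟨x, -, hx⟩ := hv
    by_cases hx1 : x.val = p + 1
    · refine ⟨⟨p, by omega⟩, by simp [Finset.mem_erase, Fin.ext_iff]; omega, ?_⟩
      rw [h1, ← hx]
      congr 1
      exact Fin.ext (by simpa using hx1.symm)
    · by_cases hx2 : x.val = r + 1
      · by_cases hrp : r = p + 1
        · refine ⟨⟨p, by omega⟩, by simp [Finset.mem_erase, Fin.ext_iff]; omega, ?_⟩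
          have hel : (⟨p+1, hp⟩ : Fin n) = (⟨r, by omega⟩ : Fin n) := Fin.ext (by simp; omega)
          rw [h1, hel, h2, ← hx]
          congr 1
          exact Fin.ext (by simpa using hx2.symm)
        · refine ⟨⟨r, by omega⟩, by simp [Finset.mem_erase, Fin.ext_iff]; omega, ?_⟩
          rw [h2, ← hx]
          congr 1
          exact Fin.ext (by simpa using hx2.symm)
      · exact ⟨x, by simp [Finset.mem_erase, Fin.ext_iff]; omega, hx⟩
  have hmem : (⟨r+1, hr⟩ : Fin n) ∈ Finset.univ.erase ⟨p+1, hp⟩ := by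
    simp [Finset.mem_erase, Fin.ext_iff]; omega
  have hcard : ((Finset.univ.erase (⟨p+1, hp⟩ : Fin n)).erase (⟨r+1, hr⟩ : Fin n)).card = n - 2 := by
    rw [Finset.card_erase_of_mem hmem, Finset.card_erase_of_mem (Finset.mem_univ _),
      Finset.card_univ, Fintype.card_fin]
    omega
  exact le_trans (Finset.card_le_card hsub) (le_trans Finset.card_image_le (le_of_eq hcard))

lemma adj_collapse {n : ℕ} {g : Fin n → Fin n} (hm : Monotone g) {x y : Fin n}
    (hxy : x < y) (he : g x = g y) (h : x.val + 1 < n) :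
    g x = g ⟨x.val + 1, h⟩ := by
  have hv := Fin.lt_def.mp hxy
  have h1 : x ≤ (⟨x.val + 1, h⟩ : Fin n) := by rw [Fin.le_def]; simp
  have h2 : (⟨x.val + 1, h⟩ : Fin n) ≤ y := by rw [Fin.le_def]; simp; omega
  exact le_antisymm (hm h1) (le_trans (hm h2) (le_of_eq he.symm))

lemma classify {n : ℕ} (hn : 2 ≤ n) {g : Fin n → Fin n} (hm : Monotone g)
    (hcard : (Finset.univ.image g).card = n - 1)
    (hni : ¬ Function.Injective g) :
    ∃ a : ℕ, a + 1 < n ∧ ∀ x y : Fin n, g x = g y ↔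
      (x = y ∨ ((x.val = a ∨ x.val = a + 1) ∧ (y.val = a ∨ y.val = a + 1))) := by
  rw [Function.not_injective_iff] at hni
  obtain ⟨x0, y0, he0, hne0⟩ := hni
  have hex : ∃ x y : Fin n, x < y ∧ g x = g y := by
    rcases lt_or_gt_of_ne hne0 with h | h
    · exact ⟨x0, y0, h, he0⟩
    · exact ⟨y0, x0, h, he0.symm⟩
  obtain ⟨x1, y1, hlt, he⟩ := hex
  have hv1 := Fin.lt_def.mp hlt
  have hy1 := y1.isLt
  have ha : x1.val + 1 < n := by omega
  have hc : g ⟨x1.val, x1.isLt⟩ = g ⟨x1.val + 1, ha⟩ := adj_collapse hm hlt he ha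
  set a := x1.val with hadef
  have uniq : ∀ p : ℕ, ∀ hp : p + 1 < n, g ⟨p, by omega⟩ = g ⟨p + 1, hp⟩ → p = a := by
    intro p hp hcp
    by_contra hne
    rcases Nat.lt_or_ge p a with h | h
    · have := two_collapse hp ha h hcp hc
      omega
    · have hpa : a < p := by omega
      have := two_collapse ha hp hpa hc hcp
      omega
  have fwd : ∀ x y : Fin n, x < y → g x = g y → x.val = a ∧ y.val = a + 1 := by
    intro x y hxy hexy
    have hv := Fin.lt_def.mp hxy
    have hyn := y.isLt
    have hx1 : x.val + 1 < n := by omega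
    have hcx : g ⟨x.val, x.isLt⟩ = g ⟨x.val + 1, hx1⟩ := adj_collapse hm hxy hexy hx1
    have hxa : x.val = a := uniq x.val hx1 hcx
    have hy1 : y.val - 1 + 1 < n := by omega
    have hcy : g ⟨y.val - 1, by omega⟩ = g ⟨y.val - 1 + 1, hy1⟩ := by
      have hle2 : (⟨y.val - 1 + 1, hy1⟩ : Fin n) = y := Fin.ext (by simp; omega)
      apply le_antisymm
      · exact hm (by rw [Fin.le_def]; simp)
      · rw [hle2, ← hexy]
        exact hm (by rw [Fin.le_def]; simp; omega)
    have hya : y.val - 1 = a := uniq (y.val - 1) hy1 hcy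
    exact ⟨hxa, by omega⟩
  refine ⟨a, ha, fun x y => ⟨fun hexy => ?_, ?_⟩⟩
  · rcases lt_trichotomy x y with h | h | h
    · have := fwd x y h hexy; exact Or.inr ⟨Or.inl this.1, Or.inr this.2⟩
    · exact Or.inl h
    · have := fwd y x h hexy.symm; exact Or.inr ⟨Or.inr this.2, Or.inl this.1⟩
  · rintro (rfl | ⟨hx, hy⟩)
    · rfl
    · have ex : x = ⟨a, by omega⟩ ∨ x = ⟨a + 1, ha⟩ := by
        rcases hx with h | h
        · exact Or.inl (Fin.ext h)
        · exact Or.inr (Fin.ext h)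
      have ey : y = ⟨a, by omega⟩ ∨ y = ⟨a + 1, ha⟩ := by
        rcases hy with h | h
        · exact Or.inl (Fin.ext h)
        · exact Or.inr (Fin.ext h)
      rcases ex with rfl | rfl <;> rcases ey with rfl | rfl
      · rfl
      · exact hc
      · exact hc.symm
      · rfl
def zetaEl (n q0 : ℕ) (hq : q0 < n) (i : Fin (n - 1)) : OrderSing n :=
  ⟨zfun n i.val q0,
   zfun_mono (by have := i.isLt; omega) hq,
   by
    intro hb
    have hii : i.val + 1 < n := by have := i.isLt; omega
    have h1 : zfun n i.val q0 ⟨i.val, by omega⟩ = zfun n i.val q0 ⟨i.val + 1, hii⟩ := by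
      rw [zfun_ker hii hq]
      exact Or.inr ⟨Or.inl rfl, Or.inr rfl⟩
    have := hb.injective h1
    rw [Fin.ext_iff] at this
    simp at this⟩

lemma isZeta_zetaEl {n q : ℕ} (hq1 : 1 ≤ q) (hq2 : q ≤ n) (hq0 : q - 1 < n) (i : Fin (n - 1)) :
    IsZeta (i.val + 1) q (zetaEl n (q - 1) hq0 i) := by
  have hii : i.val + 1 < n := by have := i.isLt; omega
  constructor
  · intro x y
    show zfun n i.val (q-1) x = zfun n i.val (q-1) y ↔ _
    rw [zfun_ker hii hq0]
    constructor
    · rintro (h | ⟨h1, h2⟩)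
      · exact Or.inl h
      · exact Or.inr ⟨by omega, by omega⟩
    · rintro (h | ⟨h1, h2⟩)
      · exact Or.inl h
      · exact Or.inr ⟨by omega, by omega⟩
  · show Set.range (zfun n i.val (q-1)) = _
    rw [zfun_range hii hq0]
    ext w; simp only [Set.mem_setOf_eq]; omega

lemma zetaEl_injective {n q0 : ℕ} (hq0 : q0 < n) :
    Function.Injective (zetaEl n q0 hq0) := by
  intro i i' hee
  have hii : i.val + 1 < n := by have := i.isLt; omega
  have hii' : i'.val + 1 < n := by have := i'.isLt; omega
  have h1 : zfun n i.val q0 = zfun n i'.val q0 := congrArg Subtype.val hee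
  have h2 : zfun n i'.val q0 ⟨i.val, by omega⟩ = zfun n i'.val q0 ⟨i.val + 1, hii⟩ := by
    rw [← h1, zfun_ker hii hq0]
    exact Or.inr ⟨Or.inl rfl, Or.inr rfl⟩
  rw [zfun_ker hii' hq0] at h2
  apply Fin.ext
  rcases h2 with h | ⟨hx, hy⟩
  · rw [Fin.ext_iff] at h; simp at h
  · simp at hx hy; omega

/-- For `n ≥ 3` and any fixed `q ∈ [n]`, the set `V = {ζ_{(i,q)} : i ∈ [n - 1]}` is a
prime subset of `𝒪ₙ` of cardinality `n - 1`. -/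
theorem zeta_set_isPrimeSubset (n : ℕ) (hn : 3 ≤ n) (q : ℕ) (hq : 1 ≤ q ∧ q ≤ n) :
    IsPrimeSubset {f : OrderSing n | ∃ i : ℕ, 1 ≤ i ∧ i ≤ n - 1 ∧ IsZeta i q f} ∧
    ({f : OrderSing n | ∃ i : ℕ, 1 ≤ i ∧ i ≤ n - 1 ∧ IsZeta i q f}).ncard = n - 1 := by
  obtain ⟨hq1, hq2⟩ := hq
  have hq0 : q - 1 < n := by omega
  have hVeq : {f : OrderSing n | ∃ i : ℕ, 1 ≤ i ∧ i ≤ n - 1 ∧ IsZeta i q f}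
      = Set.range (zetaEl n (q - 1) hq0) := by
    ext f
    simp only [Set.mem_setOf_eq, Set.mem_range]
    constructor
    · rintro ⟨j, hj1, hj2, hzf⟩
      refine ⟨⟨j - 1, by omega⟩, ?_⟩
      apply Subtype.ext
      have hji : j - 1 + 1 < n := by omega
      apply mono_unique_s14 (zfun_mono hji hq0) f.2.1
      · intro x y
        rw [zfun_ker hji hq0, hzf.1 x y]
        constructor
        · rintro (h | ⟨h1, h2⟩)
          · exact Or.inl h
          · exact Or.inr ⟨by omega, by omega⟩
        · rintro (h | ⟨h1, h2⟩)
          · exact Or.inl h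
          · exact Or.inr ⟨by omega, by omega⟩
      · rw [zfun_range hji hq0, hzf.2]
        ext w; simp only [Set.mem_setOf_eq]; omega
    · rintro ⟨i, rfl⟩
      exact ⟨i.val + 1, by omega, by have := i.isLt; omega, isZeta_zetaEl hq1 hq2 hq0 i⟩
  refine ⟨⟨?_, ?_⟩, ?_⟩
  · rw [hVeq]
    exact ⟨zetaEl n (q - 1) hq0 ⟨0, by omega⟩, Set.mem_range_self _⟩
  · intro f g hfg
    right
    obtain ⟨j, hj1, hj2, hz⟩ := hfg
    have hsub : {y : Fin n | (y : ℕ) + 1 ≠ q} ⊆ Set.range g.1 := by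
      intro y hy
      rw [← hz.2] at hy
      obtain ⟨x, hx⟩ := hy
      exact ⟨f.1 x, hx⟩
    have hnsurj : ¬ Function.Surjective g.1 := by
      intro hs
      exact g.2.2 ⟨Finite.injective_iff_surjective.mpr hs, hs⟩
    obtain ⟨w, hw⟩ : ∃ w, w ∉ Set.range g.1 := by
      by_contra hcon; push_neg at hcon
      exact hnsurj fun y => hcon y
    have hwq : w = (⟨q - 1, hq0⟩ : Fin n) := by
      by_contra hne
      apply hw
      apply hsub
      simp only [Set.mem_setOf_eq]
      intro hcon
      exact hne (Fin.ext (by simp; omega))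
    have hbr : Set.range g.1 = {y : Fin n | (y : ℕ) + 1 ≠ q} := by
      apply Set.Subset.antisymm _ hsub
      rintro v ⟨x, hx⟩
      simp only [Set.mem_setOf_eq]
      intro hcon
      have hv : v = (⟨q - 1, hq0⟩ : Fin n) := Fin.ext (by simp; omega)
      rw [hwq] at hw
      exact hw ⟨x, by rw [hx, hv]⟩
    have himg : Finset.image g.1 Finset.univ = Finset.univ.erase (⟨q - 1, hq0⟩ : Fin n) := by
      apply Finset.coe_injective
      rw [Finset.coe_image, Finset.coe_univ, Set.image_univ, hbr, Finset.coe_erase,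
        Finset.coe_univ]
      ext y
      simp only [Set.mem_setOf_eq, Set.mem_diff, Set.mem_univ, true_and,
        Set.mem_singleton_iff]
      rw [Ne, not_iff_not, Fin.ext_iff]
      simp
      omega
    have hcard : (Finset.univ.image g.1).card = n - 1 := by
      rw [himg, Finset.card_erase_of_mem (Finset.mem_univ _), Finset.card_univ,
        Fintype.card_fin]
    have hni : ¬ Function.Injective g.1 := fun hinj' =>
      hnsurj (Finite.injective_iff_surjective.mp hinj')
    obtain ⟨a0, ha0, hker⟩ := classify (by omega) g.2.1 hcard hni
    refine ⟨a0 + 1, by omega, by omega, fun x y => ?_, hbr⟩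
    rw [hker x y]
    constructor
    · rintro (h | ⟨h1, h2⟩)
      · exact Or.inl h
      · exact Or.inr ⟨by omega, by omega⟩
    · rintro (h | ⟨h1, h2⟩)
      · exact Or.inl h
      · exact Or.inr ⟨by omega, by omega⟩
  · rw [hVeq, ← Set.image_univ, Set.ncard_image_of_injective _ (zetaEl_injective hq0),
      Set.ncard_univ, Nat.card_eq_fintype_card, Fintype.card_fin]
end

section
/- For n ≥ 3, the large rank of the semigroup 𝒪_n of order-preserving singular selfmaps of [n] is r₅(𝒪_n) = C(2n − 1, n − 1) − n + 1, where C denotes the binomial coefficient. -/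
set_option maxHeartbeats 1000000


namespace LRAux

variable {n : ℕ}

lemma mul_val (f g : OrderSing n) (x : Fin n) : (f * g).1 x = g.1 (f.1 x) := rfl

lemma os_ext {f g : OrderSing n} (h : ∀ x, f.1 x = g.1 x) : f = g := Subtype.ext (funext h)

/-- chain bound for strict mono nat-valued sequences on Fin m -/
lemma chain {m : ℕ} {v : Fin m → ℕ} (hv : StrictMono v) {i j : Fin m} (h : i ≤ j) :
    v i + (j.val - i.val) ≤ v j := by
  have key : ∀ d (i j : Fin m), i.val + d = j.val → v i + d ≤ v j := by
    intro d
    induction d with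
    | zero => intro i j hij; have : i = j := Fin.ext (by omega); subst this; omega
    | succ k ih =>
      intro i j hij
      have hj' : i.val + k < m := by omega
      have h1 := ih i ⟨i.val + k, hj'⟩ rfl
      have h2 : v ⟨i.val + k, hj'⟩ < v j := hv (by simp [Fin.lt_def]; omega)
      omega
  have := key (j.val - i.val) i j (by have := Fin.le_def.mp h; omega)
  omega

lemma strictMono_val {f : Fin n → Fin n} (hf : StrictMono f) :
    StrictMono (fun i => (f i).val) := fun i j hij => hf hij

lemma mono_bij_eq_id {f : Fin n → Fin n} (hm : Monotone f) (hb : Function.Bijective f) :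
    ∀ x, f x = x := by
  have hsm : StrictMono f := hm.strictMono_of_injective hb.1
  have hv := strictMono_val hsm
  intro x
  have hn : 0 < n := x.pos
  have hlb : x.val ≤ (f x).val := by
    have := chain hv (i := ⟨0, hn⟩) (j := x) (by simp [Fin.le_def])
    have e0 : ((⟨0, hn⟩ : Fin n) : ℕ) = 0 := rfl
    omega
  have hub : (f x).val ≤ x.val := by
    have := chain hv (i := x) (j := ⟨n - 1, by omega⟩) (by simp [Fin.le_def]; omega)
    have h2 := (f ⟨n - 1, by omega⟩).isLt
    have e1 : ((⟨n - 1, by omega⟩ : Fin n) : ℕ) = n - 1 := rfl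
    omega
  exact Fin.ext (le_antisymm hub hlb)

/-- every element of OrderSing has an adjacent collapse -/
lemma exists_collapse (f : OrderSing n) : ∃ c : ℕ, ∃ hc : c + 1 < n,
    f.1 ⟨c, by omega⟩ = f.1 ⟨c + 1, hc⟩ := by
  have hni : ¬ Function.Injective f.1 := fun h =>
    f.2.2 ((Finite.injective_iff_bijective).mp h)
  rw [Function.not_injective_iff] at hni
  obtain ⟨a, b, hab, hne⟩ := hni
  rcases Fin.lt_or_lt_of_ne hne with h | h
  · refine ⟨a.val, by omega, ?_⟩
    have h1 : f.1 a ≤ f.1 ⟨a.val + 1, by omega⟩ := f.2.1 (by simp [Fin.le_def])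
    have h2 : f.1 ⟨a.val + 1, by omega⟩ ≤ f.1 b := f.2.1 (by simp [Fin.le_def]; omega)
    rw [← hab] at h2
    have e : f.1 (⟨a.val, by omega⟩ : Fin n) = f.1 a := congrArg _ (Fin.ext rfl)
    rw [e]
    exact le_antisymm h1 h2
  · refine ⟨b.val, by omega, ?_⟩
    have h1 : f.1 b ≤ f.1 ⟨b.val + 1, by omega⟩ := f.2.1 (by simp [Fin.le_def])
    have h2 : f.1 ⟨b.val + 1, by omega⟩ ≤ f.1 a := f.2.1 (by simp [Fin.le_def]; omega)
    rw [hab] at h2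
    have e : f.1 (⟨b.val, by omega⟩ : Fin n) = f.1 b := congrArg _ (Fin.ext rfl)
    rw [e]
    exact le_antisymm h1 h2

def kv (p x : ℕ) : ℕ := if x ≤ p then x else x - 1
def sv (m k : ℕ) : ℕ := if k < m then k else k + 1

/-- the grid value function: kernel merges p,p+1 ; image misses m -/
def gv (p m x : ℕ) : ℕ := sv m (kv p x)

lemma gv_lt {p m x : ℕ} (hp : p + 1 < n) (hx : x < n) : gv p m x < n := by
  simp only [gv, sv, kv]; split_ifs <;> omega

lemma gv_mono {p m x y : ℕ} (hxy : x ≤ y) : gv p m x ≤ gv p m y := by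
  simp only [gv, sv, kv]; split_ifs <;> omega

lemma gv_collapse (p m : ℕ) : gv p m p = gv p m (p + 1) := by
  simp only [gv, sv, kv]; split_ifs <;> omega

/-- grid element of OrderSing n -/
def gfun (hn : 2 ≤ n) (p m : ℕ) : OrderSing n :=
  ⟨fun x => ⟨gv (min p (n - 2)) (min m (n - 1)) x.val,
      gv_lt (by omega) x.isLt⟩,
   fun x y hxy => by
      simp only [Fin.le_def]
      exact gv_mono (Fin.le_def.mp hxy),
   fun hb => by
      have h1 : gv (min p (n-2)) (min m (n-1)) (min p (n-2))
          = gv (min p (n-2)) (min m (n-1)) (min p (n-2) + 1) := gv_collapse _ _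
      have := hb.1 (a₁ := ⟨min p (n-2), by omega⟩) (a₂ := ⟨min p (n-2) + 1, by omega⟩)
        (Fin.ext h1)
      simp [Fin.ext_iff] at this⟩

lemma gfun_val (hn : 2 ≤ n) {p m : ℕ} (hp : p ≤ n - 2) (hm : m ≤ n - 1) (x : Fin n) :
    ((gfun hn p m).1 x).val = gv p m x.val := by
  simp [gfun, Nat.min_eq_left hp, Nat.min_eq_left hm]


lemma kv_sv {a b k : ℕ} (hab : a = b ∨ a = b + 1) : kv b (sv a k) = k := by
  simp only [sv, kv]; split_ifs <;> omega

lemma gv_comp {p a b m x : ℕ} (hab : a = b ∨ a = b + 1) :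
    gv b m (gv p a x) = gv p m x := by
  unfold gv
  rw [kv_sv hab]

lemma gfun_mul (hn : 2 ≤ n) {p a b m : ℕ} (hp : p ≤ n - 2) (ha : a ≤ n - 1)
    (hb : b ≤ n - 2) (hm : m ≤ n - 1) (hab : a = b ∨ a = b + 1) :
    gfun hn p a * gfun hn b m = gfun hn p m := by
  apply os_ext
  intro x
  apply Fin.ext
  rw [mul_val]
  have h1 := gfun_val hn hp ha x
  have h3 := gfun_val hn hp hm x
  have h2 := gfun_val hn hb hm ((gfun hn p a).1 x)
  rw [h2, h3]
  have : ((gfun hn p a).1 x).val = gv p a x.val := h1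
  rw [this]
  exact gv_comp hab

lemma gv_inj_p {p p' m m' : ℕ} (hn : 2 ≤ n) (hp : p ≤ n - 2) (hp' : p' ≤ n - 2)
    (H : ∀ x < n, gv p m x = gv p' m' x) : p = p' := by
  by_contra hne
  rcases Nat.lt_or_ge p p' with h | h
  · have h1 := H p (by omega)
    have h2 := H (p + 1) (by omega)
    revert h1 h2; simp only [gv, sv, kv]; split_ifs <;> omega
  · have hlt : p' < p := by omega
    have h1 := H p' (by omega)
    have h2 := H (p' + 1) (by omega)
    revert h1 h2; simp only [gv, sv, kv]; split_ifs <;> omega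

lemma gv_inj_m {p m m' : ℕ} (hn : 2 ≤ n) (hp : p ≤ n - 2) (hm : m ≤ n - 1) (hm' : m' ≤ n - 1)
    (H : ∀ x < n, gv p m x = gv p' m' x) (hpp : p = p') : m = m' := by
  subst hpp
  by_contra hne
  rcases Nat.lt_or_ge m m' with h | h
  · have h1 := H (if m ≤ p then m else m + 1) (by split_ifs <;> omega)
    revert h1; simp only [gv, sv, kv]; split_ifs <;> omega
  · have hlt : m' < m := by omega
    have h1 := H (if m' ≤ p then m' else m' + 1) (by split_ifs <;> omega)
    revert h1; simp only [gv, sv, kv]; split_ifs <;> omega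

lemma gfun_inj (hn : 2 ≤ n) {p p' m m' : ℕ} (hp : p ≤ n - 2) (hp' : p' ≤ n - 2)
    (hm : m ≤ n - 1) (hm' : m' ≤ n - 1) (h : gfun hn p m = gfun hn p' m') :
    p = p' ∧ m = m' := by
  have H : ∀ x < n, gv p m x = gv p' m' x := by
    intro x hx
    have := congrArg (fun f : OrderSing n => (f.1 ⟨x, hx⟩).val) h
    simpa [gfun_val hn hp hm, gfun_val hn hp' hm'] using this
  have h1 : p = p' := gv_inj_p hn hp hp' H
  exact ⟨h1, gv_inj_m hn hp hm hm' H h1⟩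


lemma gv_u (c x : ℕ) : gv c c x = if x = c then c + 1 else x := by
  simp only [gv, sv, kv]; split_ifs <;> omega

lemma gv_d (b x : ℕ) (hb : 0 < b) : gv (b-1) b x = if x = b then b - 1 else x := by
  simp only [gv, sv, kv]; split_ifs <;> omega

lemma factor_u (hn : 2 ≤ n) (c : ℕ) (hc : c + 1 < n) (f h : OrderSing n)
    (hag : ∀ x : Fin n, x.val ≠ c → h.1 x = f.1 x)
    (hcol : f.1 ⟨c, by omega⟩ = f.1 ⟨c + 1, hc⟩) :
    gfun hn c c * h = f := by
  apply os_ext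
  intro x
  rw [mul_val]
  by_cases hx : x.val = c
  · have e1 : (gfun hn c c).1 x = ⟨c + 1, hc⟩ := by
      apply Fin.ext
      rw [gfun_val hn (by omega) (by omega), gv_u, if_pos hx]
    rw [e1, hag ⟨c + 1, hc⟩ (by show c + 1 ≠ c; omega), ← hcol]
    exact congrArg _ (Fin.ext hx.symm)
  · have e1 : (gfun hn c c).1 x = x := by
      apply Fin.ext
      rw [gfun_val hn (by omega) (by omega), gv_u, if_neg hx]
    rw [e1]
    exact hag x hx

lemma factor_d (hn : 2 ≤ n) (b : ℕ) (hb : b < n) (hb0 : 0 < b) (f h : OrderSing n)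
    (hag : ∀ x : Fin n, x.val ≠ b → h.1 x = f.1 x)
    (hcol : f.1 ⟨b - 1, by omega⟩ = f.1 ⟨b, hb⟩) :
    gfun hn (b - 1) b * h = f := by
  apply os_ext
  intro x
  rw [mul_val]
  by_cases hx : x.val = b
  · have e1 : (gfun hn (b-1) b).1 x = ⟨b - 1, by omega⟩ := by
      apply Fin.ext
      rw [gfun_val hn (by omega) (by omega), gv_d _ _ hb0, if_pos hx]
    rw [e1, hag ⟨b - 1, by omega⟩ (by show b - 1 ≠ b; omega), hcol]
    exact congrArg _ (Fin.ext hx.symm)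
  · have e1 : (gfun hn (b-1) b).1 x = x := by
      apply Fin.ext
      rw [gfun_val hn (by omega) (by omega), gv_d _ _ hb0, if_neg hx]
    rw [e1]
    exact hag x hx

/-- measure for induction -/
def mu (f : OrderSing n) : ℕ := ∑ x : Fin n, ((f.1 x).val - x.val + (x.val - (f.1 x).val))

/-- modified map -/
def mkh (f : OrderSing n) (t newv : ℕ) (hnewv : newv < n)
    (hmono : ∀ x y : Fin n, x ≤ y →
      (if x.val = t then newv else (f.1 x).val) ≤ (if y.val = t then newv else (f.1 y).val))
    (hnid : ∃ x : Fin n, (if x.val = t then newv else (f.1 x).val) ≠ x.val) : OrderSing n :=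
  ⟨fun x => if x.val = t then ⟨newv, hnewv⟩ else f.1 x,
   fun x y hxy => by
     simp only [Fin.le_def, apply_ite Fin.val]
     exact hmono x y hxy,
   fun hbij => by
     obtain ⟨x, hx⟩ := hnid
     have := mono_bij_eq_id (f := fun x : Fin n => if x.val = t then ⟨newv, hnewv⟩ else f.1 x)
       (fun a b hab => by simp only [Fin.le_def, apply_ite Fin.val]; exact hmono a b hab)
       hbij x
     apply hx
     have := congrArg Fin.val this
     simpa [apply_ite Fin.val] using this⟩

lemma mkh_val (f : OrderSing n) (t newv : ℕ) (hnewv : newv < n) (hmono) (hnid) (x : Fin n) :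
    ((mkh f t newv hnewv hmono hnid).1 x).val = if x.val = t then newv else (f.1 x).val := by
  simp only [mkh, apply_ite Fin.val]

lemma mu_mkh_lt (f : OrderSing n) (t newv : ℕ) (ht : t < n) (hnewv : newv < n) (hmono) (hnid)
    (hd : newv - t + (t - newv) < (f.1 ⟨t, ht⟩).val - t + (t - (f.1 ⟨t, ht⟩).val)) :
    mu (mkh f t newv hnewv hmono hnid) < mu f := by
  apply Finset.sum_lt_sum
  · intro i _
    rw [mkh_val]
    by_cases hi : i.val = t
    · have : i = ⟨t, ht⟩ := Fin.ext hi
      subst this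
      rw [if_pos hi]
      omega
    · rw [if_neg hi]
  · refine ⟨⟨t, ht⟩, Finset.mem_univ _, ?_⟩
    rw [mkh_val]
    have e : ((⟨t, ht⟩ : Fin n)).val = t := rfl
    rw [if_pos e]
    exact hd


theorem all_mem (hn : 2 ≤ n) (T : Subsemigroup (OrderSing n))
    (hT : ∀ p m : ℕ, p ≤ n - 2 → m ≤ n - 1 → gfun hn p m ∈ T) :
    ∀ f : OrderSing n, f ∈ T := by
  suffices H : ∀ N, ∀ f : OrderSing n, mu f ≤ N → f ∈ T by
    intro f; exact H (mu f) f le_rfl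
  intro N
  induction N using Nat.strong_induction_on with
  | _ N ih =>
  intro f hmuf
  obtain ⟨c, hc, hcol⟩ := exists_collapse f
  set F : ℕ → ℕ := fun x => if h : x < n then (f.1 ⟨x, h⟩).val else 0 with hF
  have Fspec : ∀ (x : ℕ) (hx : x < n), F x = (f.1 ⟨x, hx⟩).val := by
    intro x hx; simp only [hF, dif_pos hx]
  have Flt : ∀ x, x < n → F x < n := by
    intro x hx; rw [Fspec x hx]; exact (f.1 _).isLt
  have Fmono : ∀ x y, x ≤ y → y < n → F x ≤ F y := by
    intro x y hxy hy
    rw [Fspec x (by omega), Fspec y hy]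
    exact f.2.1 (show (⟨x, by omega⟩ : Fin n) ≤ ⟨y, hy⟩ from hxy)
  have hcolF : F c = F (c + 1) := by
    rw [Fspec c (by omega), Fspec (c+1) hc]
    exact congrArg Fin.val hcol
  set v := F c with hv
  have hvn : v < n := Flt c (by omega)
  have hex : ∃ x, F x = v := ⟨c, rfl⟩
  have hav : F (Nat.find hex) = v := Nat.find_spec hex
  set a := Nat.find hex with ha
  have hamin : ∀ y, y < a → F y ≠ v := fun y hy => Nat.find_min hex hy
  have hac : a ≤ c := Nat.find_min' hex rfl
  have han : a + 1 < n := by omega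
  have hav1 : F (a + 1) = v := by
    rcases Nat.lt_or_ge a c with h | h
    · have h1 : F (a + 1) ≤ F c := Fmono _ _ (by omega) (by omega)
      have h2 : F a ≤ F (a + 1) := Fmono _ _ (by omega) (by omega)
      omega
    · have hh : a = c := by omega
      rw [hh]
      exact hcolF.symm
  have hP1 : c + 1 ≤ n - 1 := by omega
  have hcv1 : F (c + 1) = v := hcolF.symm
  have hbv : F (Nat.findGreatest (fun x => F x = v) (n - 1)) = v :=
    Nat.findGreatest_spec (P := fun x => F x = v) hP1 hcv1
  set b := Nat.findGreatest (fun x => F x = v) (n - 1) with hb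
  have hbc : c + 1 ≤ b := Nat.le_findGreatest (P := fun x => F x = v) hP1 hcv1
  have hble : b ≤ n - 1 := Nat.findGreatest_le (n - 1)
  have hbmax : ∀ y, b < y → y ≤ n - 1 → F y ≠ v := fun y h1 h2 =>
    Nat.findGreatest_is_greatest (P := fun x => F x = v) h1 h2
  have hbv1 : F (b - 1) = v := by
    have h2 : F a ≤ F (b - 1) := Fmono _ _ (by omega) (by omega)
    have h3 : F (b - 1) ≤ F b := Fmono _ _ (by omega) (by omega)
    omega
  have hab : a < b := by omega
  rcases Nat.lt_or_ge a v with hcase | hcase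
  · -- Move B at position a (lower the left end of the class)
    set newv := if a = 0 then 0 else max (F (a - 1)) a with hnew
    have hK1 : newv < v := by
      rcases eq_or_ne a 0 with h0 | h0
      · rw [hnew, if_pos h0]; omega
      · have h1 : F (a - 1) ≤ F a := Fmono _ _ (by omega) (by omega)
        have h2 : F (a - 1) ≠ v := hamin _ (by omega)
        rw [hnew, if_neg h0]; omega
    have hK2 : a ≤ newv := by
      rcases eq_or_ne a 0 with h0 | h0
      · rw [hnew, if_pos h0]; omega
      · rw [hnew, if_neg h0]; omega
    have hK3 : ∀ x, x < a → F x ≤ newv := by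
      intro x hx
      have h0 : a ≠ 0 := by omega
      have h1 : F x ≤ F (a - 1) := Fmono _ _ (by omega) (by omega)
      rw [hnew, if_neg h0]; omega
    have hnewn : newv < n := by omega
    have hmono' : ∀ x y : Fin n, x ≤ y →
        (if x.val = a then newv else (f.1 x).val) ≤
        (if y.val = a then newv else (f.1 y).val) := by
      intro x y hxy
      have hxy' : x.val ≤ y.val := hxy
      by_cases hx : x.val = a <;> by_cases hy : y.val = a
      · rw [if_pos hx, if_pos hy]
      · rw [if_pos hx, if_neg hy]
        have h1 : F (a + 1) ≤ F y.val := Fmono _ _ (by omega) y.isLt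
        have h2 := Fspec y.val y.isLt
        have h3 : f.1 ⟨y.val, y.isLt⟩ = f.1 y := congrArg _ (Fin.ext rfl)
        rw [h3] at h2
        omega
      · rw [if_neg hx, if_pos hy]
        have h1 : F x.val ≤ newv := hK3 x.val (by omega)
        have h2 := Fspec x.val x.isLt
        have h3 : f.1 ⟨x.val, x.isLt⟩ = f.1 x := congrArg _ (Fin.ext rfl)
        rw [h3] at h2
        omega
      · rw [if_neg hx, if_neg hy]
        exact f.2.1 hxy
    by_cases hid : ∀ x : Fin n, (if x.val = a then newv else (f.1 x).val) = x.val
    · -- then f itself is the grid element gfun a a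
      have hfeq : f = gfun hn a a := by
        apply os_ext
        intro x
        apply Fin.ext
        rw [gfun_val hn (by omega) (by omega), gv_u]
        have h1 := hid ⟨a + 1, han⟩
        rw [if_neg (show ¬((⟨a + 1, han⟩ : Fin n).val = a) by show ¬(a+1 = a); omega)] at h1
        have hval1 : ((⟨a + 1, han⟩ : Fin n)).val = a + 1 := rfl
        have e1 := Fspec (a + 1) han
        by_cases hx : x.val = a
        · rw [if_pos hx]
          have hxx : x = ⟨a, by omega⟩ := Fin.ext hx
          rw [hxx]
          have e2 := Fspec a (by omega)
          omega
        · rw [if_neg hx]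
          have h2 := hid x
          rw [if_neg hx] at h2
          exact h2
      rw [hfeq]
      exact hT a a (by omega) (by omega)
    · push_neg at hid
      set h := mkh f a newv hnewn hmono' hid with hh
      have hcolf : f.1 ⟨a, by omega⟩ = f.1 ⟨a + 1, han⟩ := by
        apply Fin.ext
        have e1 := Fspec a (by omega)
        have e2 := Fspec (a + 1) han
        omega
      have hfac : gfun hn a a * h = f := by
        apply factor_u hn a han f h ?_ hcolf
        intro x hx
        show (if x.val = a then _ else f.1 x) = f.1 x
        rw [if_neg hx]
      have hmuh : mu h < mu f := by
        apply mu_mkh_lt f a newv (by omega) hnewn hmono' hid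
        have e1 := Fspec a (by omega)
        omega
      have hhT : h ∈ T := ih (mu h) (by omega) h le_rfl
      rw [← hfac]
      exact T.mul_mem (hT a a (by omega) (by omega)) hhT
  · -- Move A at position b (raise the right end of the class)
    have hvb : v < b := by omega
    set newv := if b = n - 1 then n - 1 else min (F (b + 1)) b with hnew
    have hbn : b < n := by omega
    have hb0 : 0 < b := by omega
    have hK1 : v < newv := by
      rcases eq_or_ne b (n - 1) with h0 | h0
      · rw [hnew, if_pos h0]; omega
      · have h1 : F b ≤ F (b + 1) := Fmono _ _ (by omega) (by omega)
        have h2 : F (b + 1) ≠ v := hbmax _ (by omega) (by omega)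
        rw [hnew, if_neg h0]; omega
    have hK2 : newv ≤ b := by
      rcases eq_or_ne b (n - 1) with h0 | h0
      · rw [hnew, if_pos h0]; omega
      · rw [hnew, if_neg h0]; omega
    have hK3 : ∀ y, b < y → y < n → newv ≤ F y := by
      intro y hy hyn
      have h0 : b ≠ n - 1 := by omega
      have h1 : F (b + 1) ≤ F y := Fmono _ _ (by omega) (by omega)
      rw [hnew, if_neg h0]; omega
    have hnewn : newv < n := by omega
    have hmono' : ∀ x y : Fin n, x ≤ y →
        (if x.val = b then newv else (f.1 x).val) ≤
        (if y.val = b then newv else (f.1 y).val) := by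
      intro x y hxy
      have hxy' : x.val ≤ y.val := hxy
      by_cases hx : x.val = b <;> by_cases hy : y.val = b
      · rw [if_pos hx, if_pos hy]
      · rw [if_pos hx, if_neg hy]
        have h1 : newv ≤ F y.val := hK3 y.val (by omega) y.isLt
        have h2 := Fspec y.val y.isLt
        have h3 : f.1 ⟨y.val, y.isLt⟩ = f.1 y := congrArg _ (Fin.ext rfl)
        rw [h3] at h2
        omega
      · rw [if_neg hx, if_pos hy]
        have h1 : F x.val ≤ F (b - 1) := Fmono _ _ (by omega) (by omega)
        have h2 := Fspec x.val x.isLt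
        have h3 : f.1 ⟨x.val, x.isLt⟩ = f.1 x := congrArg _ (Fin.ext rfl)
        rw [h3] at h2
        omega
      · rw [if_neg hx, if_neg hy]
        exact f.2.1 hxy
    by_cases hid : ∀ x : Fin n, (if x.val = b then newv else (f.1 x).val) = x.val
    · have hfeq : f = gfun hn (b - 1) b := by
        apply os_ext
        intro x
        apply Fin.ext
        rw [gfun_val hn (by omega) (by omega), gv_d _ _ hb0]
        have h1 := hid ⟨b - 1, by omega⟩
        rw [if_neg (show ¬((⟨b - 1, by omega⟩ : Fin n).val = b) by show ¬(b-1 = b); omega)] at h1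
        have hval1 : ((⟨b - 1, by omega⟩ : Fin n)).val = b - 1 := rfl
        have e1 := Fspec (b - 1) (by omega)
        by_cases hx : x.val = b
        · rw [if_pos hx]
          have hxx : x = ⟨b, hbn⟩ := Fin.ext hx
          rw [hxx]
          have e2 := Fspec b hbn
          omega
        · rw [if_neg hx]
          have h2 := hid x
          rw [if_neg hx] at h2
          exact h2
      rw [hfeq]
      exact hT (b - 1) b (by omega) (by omega)
    · push_neg at hid
      set h := mkh f b newv hnewn hmono' hid with hh
      have hcolf : f.1 ⟨b - 1, by omega⟩ = f.1 ⟨b, hbn⟩ := by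
        apply Fin.ext
        have e1 := Fspec (b - 1) (by omega)
        have e2 := Fspec b hbn
        omega
      have hfac : gfun hn (b - 1) b * h = f := by
        apply factor_d hn b hbn hb0 f h ?_ hcolf
        intro x hx
        show (if x.val = b then _ else f.1 x) = f.1 x
        rw [if_neg hx]
      have hmuh : mu h < mu f := by
        apply mu_mkh_lt f b newv hbn hnewn hmono' hid
        have e1 := Fspec b hbn
        omega
      have hhT : h ∈ T := ih (mu h) (by omega) h le_rfl
      rw [← hfac]
      exact T.mul_mem (hT (b - 1) b (by omega) (by omega)) hhT


theorem grid_mem (hn : 2 ≤ n) (hn3 : 3 ≤ n) (T : Subsemigroup (OrderSing n))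
    (D : Finset (OrderSing n)) (hD : ∀ f : OrderSing n, f ∉ T → f ∈ D)
    (hcard : D.card ≤ n - 2) :
    ∀ p m : ℕ, p ≤ n - 2 → m ≤ n - 1 → gfun hn p m ∈ T := by
  intro p m hp hm
  by_contra hpm
  classical
  set C := (Finset.range (n-1)).filter (fun b => gfun hn b m ∉ T) with hC
  set R := (Finset.range n).filter (fun a => gfun hn p a ∉ T) with hR
  set B := (Finset.range (n-1)).filter (fun b => gfun hn b m ∈ T) with hB
  have hCcard : C.card ≤ n - 2 := by
    refine le_trans (Finset.card_le_card_of_injOn (fun b => gfun hn b m) ?_ ?_) hcard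
    · intro b hb
      exact hD _ (Finset.mem_filter.1 hb).2
    · intro b hb b' hb' heq
      have h1 := Finset.mem_range.1 (Finset.mem_filter.1 hb).1
      have h2 := Finset.mem_range.1 (Finset.mem_filter.1 hb').1
      exact (gfun_inj hn (by omega) (by omega) hm hm heq).1
  have hpart : B.card + C.card = n - 1 := by
    rw [hB, hC]
    rw [Finset.card_filter_add_card_filter_not]
    · exact Finset.card_range (n-1)
  have hBne : B.Nonempty := by
    rw [← Finset.card_pos]
    omega
  have hrow : ∀ b, b < n - 1 → gfun hn b m ∈ T →
      gfun hn p b ∉ T ∧ gfun hn p (b+1) ∉ T := by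
    intro b hb hbT
    constructor
    · intro hcontra
      apply hpm
      rw [← gfun_mul hn (a := b) (b := b) hp (by omega) (by omega) hm (Or.inl rfl)]
      exact T.mul_mem hcontra hbT
    · intro hcontra
      apply hpm
      rw [← gfun_mul hn (a := b + 1) (b := b) hp (by omega) (by omega) hm (Or.inr rfl)]
      exact T.mul_mem hcontra hbT
  have hsub : B ∪ B.image (fun b => b + 1) ⊆ R := by
    intro x hx
    rcases Finset.mem_union.1 hx with hx | hx
    · obtain ⟨hx1, hx2⟩ := Finset.mem_filter.1 hx
      have hxr := Finset.mem_range.1 hx1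
      exact Finset.mem_filter.2 ⟨Finset.mem_range.2 (by omega),
        (hrow x hxr hx2).1⟩
    · obtain ⟨b, hb, rfl⟩ := Finset.mem_image.1 hx
      obtain ⟨hb1, hb2⟩ := Finset.mem_filter.1 hb
      have hbr := Finset.mem_range.1 hb1
      exact Finset.mem_filter.2 ⟨Finset.mem_range.2 (by omega),
        (hrow b hbr hb2).2⟩
  have hRB : B.card + 1 ≤ R.card := by
    have hmax : B.max' hBne + 1 ∉ B := by
      intro hmem
      have := B.le_max' _ hmem
      omega
    have hins : insert (B.max' hBne + 1) B ⊆ B ∪ B.image (fun b => b + 1) := by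
      intro x hx
      rcases Finset.mem_insert.1 hx with rfl | hx
      · exact Finset.mem_union_right _ (Finset.mem_image.2 ⟨_, B.max'_mem hBne, rfl⟩)
      · exact Finset.mem_union_left _ hx
    calc B.card + 1 = (insert (B.max' hBne + 1) B).card := (Finset.card_insert_of_notMem hmax).symm
      _ ≤ (B ∪ B.image (fun b => b + 1)).card := Finset.card_le_card hins
      _ ≤ R.card := Finset.card_le_card hsub
  set RI := R.image (fun a => gfun hn p a) with hRI
  set CI := C.image (fun b => gfun hn b m) with hCI
  have hRIcard : RI.card = R.card := by
    apply Finset.card_image_of_injOn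
    intro a ha a' ha' heq
    have h1 := Finset.mem_range.1 (Finset.mem_filter.1 ha).1
    have h2 := Finset.mem_range.1 (Finset.mem_filter.1 ha').1
    exact (gfun_inj hn hp hp (by omega) (by omega) heq).2
  have hCIcard : CI.card = C.card := by
    apply Finset.card_image_of_injOn
    intro b hb b' hb' heq
    have h1 := Finset.mem_range.1 (Finset.mem_filter.1 hb).1
    have h2 := Finset.mem_range.1 (Finset.mem_filter.1 hb').1
    exact (gfun_inj hn (by omega) (by omega) hm hm heq).1
  have hUD : RI ∪ CI ⊆ D := by
    intro g hg
    rcases Finset.mem_union.1 hg with hg | hg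
    · obtain ⟨a, ha, rfl⟩ := Finset.mem_image.1 hg
      exact hD _ (Finset.mem_filter.1 ha).2
    · obtain ⟨b, hb, rfl⟩ := Finset.mem_image.1 hg
      exact hD _ (Finset.mem_filter.1 hb).2
  have hinter : RI ∩ CI ⊆ {gfun hn p m} := by
    intro g hg
    obtain ⟨hg1, hg2⟩ := Finset.mem_inter.1 hg
    obtain ⟨a, ha, rfl⟩ := Finset.mem_image.1 hg1
    obtain ⟨b, hb, heq⟩ := Finset.mem_image.1 hg2
    have h1 := Finset.mem_range.1 (Finset.mem_filter.1 ha).1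
    have h2 := Finset.mem_range.1 (Finset.mem_filter.1 hb).1
    obtain ⟨hbp, hma⟩ := gfun_inj hn (by omega) hp hm (by omega) heq
    rw [Finset.mem_singleton, ← hma]
  have hUC := Finset.card_union_add_card_inter RI CI
  have h1 : (RI ∪ CI).card ≤ D.card := Finset.card_le_card hUD
  have h2 : (RI ∩ CI).card ≤ 1 :=
    le_trans (Finset.card_le_card hinter) (by simp)
  omega


instance instDecMonoSing (n : ℕ) :
    DecidablePred (fun f : Fin n → Fin n => Monotone f ∧ ¬ Function.Bijective f) := fun f =>
  have : Decidable (Monotone f) :=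
    decidable_of_iff (∀ a b : Fin n, a ≤ b → f a ≤ f b)
      ⟨fun h _ _ hab => h _ _ hab, fun h _ _ hab => h hab⟩
  instDecidableAnd

instance instDecMono (n : ℕ) : DecidablePred (fun f : Fin n → Fin n => Monotone f) := fun f =>
  decidable_of_iff (∀ a b : Fin n, a ≤ b → f a ≤ f b)
    ⟨fun h _ _ hab => h _ _ hab, fun h _ _ hab => h hab⟩

instance instFintypeOS (n : ℕ) : Fintype (OrderSing n) :=
  inferInstanceAs (Fintype {f : Fin n → Fin n // Monotone f ∧ ¬ Function.Bijective f})

instance instDecEqOS (n : ℕ) : DecidableEq (OrderSing n) :=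
  inferInstanceAs (DecidableEq {f : Fin n → Fin n // Monotone f ∧ ¬ Function.Bijective f})

def emb {n : ℕ} (hn : 1 ≤ n) (f : {f : Fin n → Fin n // Monotone f}) (i : Fin n) :
    Fin (2*n-1) :=
  ⟨(f.1 i).val + i.val, by have h1 := (f.1 i).isLt; have h2 := i.isLt; omega⟩

lemma emb_strictMono {n : ℕ} (hn : 1 ≤ n) (f : {f : Fin n → Fin n // Monotone f}) :
    StrictMono (emb hn f) := by
  intro i j hij
  have h1 : (f.1 i).val ≤ (f.1 j).val := f.2 (le_of_lt hij)
  have h2 : i.val < j.val := hij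
  show (emb hn f i).val < (emb hn f j).val
  simp only [emb]
  omega

lemma chainFin {m M : ℕ} (e : Fin m ↪o Fin M) {i j : Fin m} (h : i ≤ j) :
    (e i).val + (j.val - i.val) ≤ (e j).val :=
  chain (v := fun k => (e k).val) (fun a b hab => e.strictMono hab) h

lemma ordEmb_lb {m M : ℕ} (e : Fin m ↪o Fin M) (i : Fin m) : i.val ≤ (e i).val := by
  have h := chainFin e (i := ⟨0, i.pos⟩) (j := i)
    (show (⟨0, i.pos⟩ : Fin m) ≤ i from i.val.zero_le)
  have e0 : ((⟨0, i.pos⟩ : Fin m) : ℕ) = 0 := rfl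
  omega

lemma ordEmb_ub {m M : ℕ} (e : Fin m ↪o Fin M) (i : Fin m) :
    (e i).val + (m - 1 - i.val) ≤ M - 1 := by
  have hlt : m - 1 < m := by have := i.pos; omega
  have h := chainFin e (i := i) (j := ⟨m - 1, hlt⟩)
    (show i ≤ (⟨m - 1, hlt⟩ : Fin m) from (show i.val ≤ m - 1 by have := i.isLt; omega))
  have e1 : ((⟨m - 1, hlt⟩ : Fin m) : ℕ) = m - 1 := rfl
  have h2 := (e ⟨m - 1, hlt⟩).isLt
  have h3 := i.isLt
  omega

def monoEquiv (n : ℕ) (hn : 1 ≤ n) :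
    {f : Fin n → Fin n // Monotone f} ≃ {s : Finset (Fin (2*n-1)) // s.card = n} where
  toFun f := ⟨Finset.univ.image (emb hn f), by
    rw [Finset.card_image_of_injective _ (emb_strictMono hn f).injective,
      Finset.card_univ, Fintype.card_fin]⟩
  invFun s := ⟨fun i => ⟨(s.1.orderEmbOfFin s.2 i).val - i.val, by
      have hub := ordEmb_ub (s.1.orderEmbOfFin s.2) i
      have h3 := i.isLt
      omega⟩, by
    intro i j hij
    have hc := chainFin (s.1.orderEmbOfFin s.2) hij
    show (s.1.orderEmbOfFin s.2 i).val - i.val ≤ (s.1.orderEmbOfFin s.2 j).val - j.val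
    have hji : i.val ≤ j.val := hij
    have hlb := ordEmb_lb (s.1.orderEmbOfFin s.2) i
    omega⟩
  left_inv f := by
    apply Subtype.ext
    funext i
    apply Fin.ext
    have hu : emb hn f = ⇑((Finset.univ.image (emb hn f)).orderEmbOfFin (by
        rw [Finset.card_image_of_injective _ (emb_strictMono hn f).injective,
          Finset.card_univ, Fintype.card_fin])) :=
      Finset.orderEmbOfFin_unique _ (fun x => Finset.mem_image.2 ⟨x, Finset.mem_univ _, rfl⟩)
        (emb_strictMono hn f)
    show ((Finset.univ.image (emb hn f)).orderEmbOfFin _ i).val - i.val = (f.1 i).val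
    rw [← hu]
    show (f.1 i).val + i.val - i.val = (f.1 i).val
    omega
  right_inv s := by
    apply Subtype.ext
    ext x
    constructor
    · intro hx
      obtain ⟨i, _, rfl⟩ := Finset.mem_image.1 hx
      have hmem := Finset.orderEmbOfFin_mem s.1 s.2 i
      have he : ((s.1.orderEmbOfFin s.2 i).val - i.val) + i.val
          = (s.1.orderEmbOfFin s.2 i).val := by
        have hlb := ordEmb_lb (s.1.orderEmbOfFin s.2) i
        omega
      convert hmem using 1
      exact Fin.ext he
    · intro hx
      have hx' : x ∈ Set.range (s.1.orderEmbOfFin s.2) := by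
        rw [Finset.range_orderEmbOfFin]
        exact hx
      obtain ⟨i, hi⟩ := hx'
      refine Finset.mem_image.2 ⟨i, Finset.mem_univ _, ?_⟩
      apply Fin.ext
      show (s.1.orderEmbOfFin s.2 i).val - i.val + i.val = x.val
      have hlb := ordEmb_lb (s.1.orderEmbOfFin s.2) i
      have := congrArg Fin.val hi
      omega

lemma card_mono (n : ℕ) (hn : 1 ≤ n) :
    Fintype.card {f : Fin n → Fin n // Monotone f} = (2*n-1).choose (n-1) := by
  rw [Fintype.card_congr (monoEquiv n hn), Fintype.card_finset_len, Fintype.card_fin]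
  have h1 := Nat.choose_symm (show n ≤ 2*n-1 by omega)
  have h2 : 2*n-1-n = n-1 := by omega
  rw [h2] at h1
  exact h1.symm

lemma card_os (n : ℕ) (hn : 1 ≤ n) :
    Fintype.card (OrderSing n) = (2*n-1).choose (n-1) - 1 := by
  have h1 : Fintype.card (OrderSing n) =
      Fintype.card {f : Fin n → Fin n // Monotone f ∧ ¬ Function.Bijective f} := rfl
  rw [h1, Fintype.card_subtype]
  have h2 : Finset.univ.filter (fun f : Fin n → Fin n => Monotone f ∧ ¬ Function.Bijective f)
      = (Finset.univ.filter (fun f : Fin n → Fin n => Monotone f)).erase id := by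
    ext f
    rw [Finset.mem_erase, Finset.mem_filter, Finset.mem_filter]
    constructor
    · rintro ⟨_, hm, hnb⟩
      refine ⟨fun hid => hnb ?_, Finset.mem_univ _, hm⟩
      rw [hid]
      exact Function.bijective_id
    · rintro ⟨hne, _, hm⟩
      refine ⟨Finset.mem_univ _, hm, fun hb => hne ?_⟩
      funext x
      exact mono_bij_eq_id hm hb x
  rw [h2, Finset.card_erase_of_mem (by
    rw [Finset.mem_filter]
    exact ⟨Finset.mem_univ _, monotone_id⟩)]
  rw [← Fintype.card_subtype, card_mono n hn]


/-- predicate: the image of `f` is exactly `{0, ..., n-2}` -/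
def Q (f : OrderSing n) : Prop :=
  (∀ x : Fin n, (f.1 x).val < n - 1) ∧ ∀ y : ℕ, y < n - 1 → ∃ x : Fin n, (f.1 x).val = y

/-- the subsemigroup of maps whose image is not `{0, ..., n-2}` -/
def Msub (n : ℕ) : Subsemigroup (OrderSing n) where
  carrier := {f | ¬ Q f}
  mul_mem' := by
    intro f g hf hg hQ
    apply hg
    constructor
    · by_contra hc
      push_neg at hc
      obtain ⟨x0, hx0⟩ := hc
      have hsurj : Function.Surjective g.1 := by
        intro y
        rcases Nat.lt_or_ge y.val (n-1) with hy | hy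
        · obtain ⟨x, hx⟩ := hQ.2 y.val hy
          exact ⟨f.1 x, Fin.ext hx⟩
        · refine ⟨x0, Fin.ext ?_⟩
          have h1 := (g.1 x0).isLt
          have h2 := y.isLt
          omega
      exact g.2.2 (Finite.surjective_iff_bijective.mp hsurj)
    · intro y hy
      obtain ⟨x, hx⟩ := hQ.2 y hy
      exact ⟨f.1 x, hx⟩

lemma gv_top {q x : ℕ} (hn : 2 ≤ n) (hq : q ≤ n - 2) (hx : x < n) :
    gv q (n-1) x = if x ≤ q then x else x - 1 := by
  simp only [gv, sv, kv]; split_ifs <;> omega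

lemma Q_wit (hn : 2 ≤ n) : Q (gfun hn 0 (n-1)) := by
  constructor
  · intro x
    rw [gfun_val hn (by omega) (by omega), gv_top hn (by omega) x.isLt]
    have := x.isLt
    split_ifs <;> omega
  · intro y hy
    refine ⟨⟨if y = 0 then 0 else y + 1, by split_ifs <;> omega⟩, ?_⟩
    rw [gfun_val hn (by omega) (by omega)]
    have hval : ((⟨if y = 0 then 0 else y + 1, by split_ifs <;> omega⟩ : Fin n)).val
        = if y = 0 then 0 else y + 1 := rfl
    rw [hval, gv_top hn (by omega) (by split_ifs <;> omega)]
    split_ifs <;> omega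

lemma Q_eq (hn : 2 ≤ n) (f : OrderSing n) (hf : Q f) :
    ∃ q, q ≤ n - 2 ∧ f = gfun hn q (n-1) := by
  set F : ℕ → ℕ := fun x => if h : x < n then (f.1 ⟨x, h⟩).val else 0 with hF
  have Fspec : ∀ (x : ℕ) (hx : x < n), F x = (f.1 ⟨x, hx⟩).val := by
    intro x hx; simp only [hF, dif_pos hx]
  have Fmono : ∀ x y, x ≤ y → y < n → F x ≤ F y := by
    intro x y hxy hy
    rw [Fspec x (by omega), Fspec y hy]
    exact f.2.1 (show (⟨x, by omega⟩ : Fin n) ≤ ⟨y, hy⟩ from hxy)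
  have hQ1 : ∀ x, x < n → F x < n - 1 := by
    intro x hx; rw [Fspec x hx]; exact hf.1 _
  have hQ2 : ∀ y, y < n - 1 → ∃ z, z < n ∧ F z = y := by
    intro y hy
    obtain ⟨x, hx⟩ := hf.2 y hy
    refine ⟨x.val, x.isLt, ?_⟩
    rw [Fspec x.val x.isLt, ← hx]
  -- (i) F x ≤ x
  have hle : ∀ x, x < n → F x ≤ x := by
    by_contra hcon
    push_neg at hcon
    have hex : ∃ x, x < n ∧ x < F x := hcon
    have h0 := Nat.find_spec hex
    set x0 := Nat.find hex with hx0
    have hmin : ∀ y, y < x0 → y < n → F y ≤ y := by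
      intro y hy hyn
      have := Nat.find_min hex hy
      push_neg at this
      exact this hyn
    obtain ⟨z, hz, hzv⟩ := hQ2 x0 (by
      have := hQ1 x0 h0.1
      omega)
    rcases Nat.lt_or_ge z x0 with h | h
    · have := hmin z h (by omega)
      omega
    · have := Fmono x0 z h hz
      omega
  -- (ii) x ≤ F x + 1
  have hge : ∀ x, x < n → x ≤ F x + 1 := by
    by_contra hcon
    push_neg at hcon
    obtain ⟨w, hw, hw2⟩ := hcon
    have hP : F w + 2 ≤ w := by omega
    have hwle : w ≤ n - 1 := by omega
    have h0 : F (Nat.findGreatest (fun x => F x + 2 ≤ x) (n-1))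
        + 2 ≤ Nat.findGreatest (fun x => F x + 2 ≤ x) (n-1) :=
      Nat.findGreatest_spec (P := fun x => F x + 2 ≤ x) hwle hP
    set x1 := Nat.findGreatest (fun x => F x + 2 ≤ x) (n-1) with hx1
    have hx1le : x1 ≤ n - 1 := Nat.findGreatest_le (n-1)
    have hmax : ∀ y, x1 < y → y ≤ n - 1 → ¬(F y + 2 ≤ y) := fun y h1 h2 =>
      Nat.findGreatest_is_greatest (P := fun x => F x + 2 ≤ x) h1 h2
    obtain ⟨z, hz, hzv⟩ := hQ2 (x1 - 1) (by omega)
    rcases le_or_gt z x1 with h | h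
    · have := Fmono z x1 h (by omega)
      omega
    · have := hmax z h (by omega)
      omega
  -- least point where f differs from identity
  have hnid : ∃ x, x < n ∧ F x ≠ x := by
    by_contra hcon
    push_neg at hcon
    apply f.2.2
    have : f.1 = id := by
      funext x
      apply Fin.ext
      have := hcon x.val x.isLt
      rw [Fspec x.val x.isLt] at this
      have he : f.1 ⟨x.val, x.isLt⟩ = f.1 x := congrArg _ (Fin.ext rfl)
      rw [he] at this
      exact this
    rw [this]
    exact Function.bijective_id
  have hq0 := Nat.find_spec hnid
  set q1 := Nat.find hnid with hq1
  have hqmin : ∀ y, y < q1 → y < n → F y = y := by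
    intro y hy hyn
    have := Nat.find_min hnid hy
    push_neg at this
    exact this hyn
  have hq1pos : 1 ≤ q1 := by
    rcases Nat.eq_zero_or_pos q1 with h | h
    · exfalso
      have h1 := hle 0 (by omega)
      rw [h] at hq0
      omega
    · exact h
  have hqval : F q1 + 1 = q1 := by
    have h1 := hle q1 hq0.1
    have h2 := hge q1 hq0.1
    omega
  -- after q1 everything is x - 1
  have hafter : ∀ x, q1 ≤ x → x < n → F x + 1 = x := by
    intro x
    induction x with
    | zero => intro h1 h2; omega
    | succ x ihx =>
      intro h1 h2
      rcases Nat.lt_or_ge x q1 with h | h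
      · have : x + 1 = q1 := by omega
        rw [this]
        exact hqval
      · have hFx := ihx h (by omega)
        have h3 := hle (x+1) h2
        have h4 := hge (x+1) h2
        -- exclude F (x+1) = x+1
        by_contra hne
        have hFx1 : F (x+1) = x + 1 := by omega
        have hxn1 : x < n - 1 := by
          have := hQ1 (x+1) h2
          omega
        obtain ⟨z, hz, hzv⟩ := hQ2 x hxn1
        rcases le_or_gt z x with hzx | hzx
        · have := Fmono z x hzx (by omega)
          omega
        · have := Fmono (x+1) z (by omega) hz
          omega
  refine ⟨q1 - 1, by omega, ?_⟩
  apply os_ext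
  intro x
  apply Fin.ext
  rw [gfun_val hn (by omega) (by omega), gv_top hn (by omega) x.isLt]
  have he : f.1 ⟨x.val, x.isLt⟩ = f.1 x := congrArg _ (Fin.ext rfl)
  rw [← he, ← Fspec x.val x.isLt]
  rcases Nat.lt_or_ge x.val q1 with h | h
  · rw [if_pos (by omega), hqmin x.val h x.isLt]
  · rw [if_neg (by omega)]
    have := hafter x.val h x.isLt
    omega

lemma Qfinset (hn : 2 ≤ n) :
    ∃ W : Finset (OrderSing n), W.card ≤ n - 1 ∧ ∀ f : OrderSing n, Q f → f ∈ W := by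
  refine ⟨(Finset.range (n-1)).image (fun q => gfun hn q (n-1)), ?_, ?_⟩
  · calc ((Finset.range (n-1)).image (fun q => gfun hn q (n-1))).card
        ≤ (Finset.range (n-1)).card := Finset.card_image_le
      _ = n - 1 := Finset.card_range _
  · intro f hf
    obtain ⟨q, hq, rfl⟩ := Q_eq hn f hf
    exact Finset.mem_image.2 ⟨q, Finset.mem_range.2 (by omega), rfl⟩

end LRAux


/-- For `n ≥ 3`, the large rank of the semigroup `𝒪ₙ` of order-preserving singular
selfmaps of `[n]` — the least `k` such that every subset of cardinality `k`
generates `𝒪ₙ` — equals `C(2n - 1, n - 1) - n + 1`. -/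
theorem largeRank_orderSing (n : ℕ) (hn : 3 ≤ n) :
    IsLeast {k : ℕ | ∀ U : Finset (OrderSing n), U.card = k →
        Subsemigroup.closure (U : Set (OrderSing n)) = ⊤}
      (Nat.choose (2 * n - 1) (n - 1) - n + 1) := by
  classical
  have hn2 : 2 ≤ n := by omega
  have hn1 : 1 ≤ n := by omega
  have hC1 : 0 < Nat.choose (2 * n - 1) (n - 1) := Nat.choose_pos (by omega)
  have hcard := LRAux.card_os n hn1
  set C := Nat.choose (2 * n - 1) (n - 1) with hC
  constructor
  · -- C - n + 1 is in the set
    intro U hU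
    rw [Subsemigroup.eq_top_iff']
    intro f
    set T := Subsemigroup.closure (U : Set (OrderSing n)) with hT
    set D := Finset.univ \ U with hD
    have hDcard : D.card ≤ n - 2 := by
      rw [hD, Finset.card_sdiff_of_subset (Finset.subset_univ U), Finset.card_univ, hcard, hU]
      omega
    have hDmem : ∀ g : OrderSing n, g ∉ T → g ∈ D := by
      intro g hg
      rw [hD, Finset.mem_sdiff]
      refine ⟨Finset.mem_univ _, fun hgU => hg ?_⟩
      exact Subsemigroup.subset_closure hgU
    exact LRAux.all_mem hn2 T (LRAux.grid_mem hn2 hn T D hDmem hDcard) f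
  · -- lower bound
    intro k hk
    by_contra hlt
    push_neg at hlt
    have hkle : k ≤ C - n := by omega
    obtain ⟨W, hWcard, hWmem⟩ := LRAux.Qfinset (n := n) hn2
    set M := Finset.univ \ W with hM
    have hMcard : C - n ≤ M.card := by
      have h1 : Finset.univ.card - W.card ≤ M.card := Finset.le_card_sdiff W Finset.univ
      rw [Finset.card_univ, hcard] at h1
      omega
    obtain ⟨V, hVM, hVcard⟩ := Finset.exists_subset_card_eq (le_trans hkle hMcard)
    have hclos := hk V hVcard
    have hle : Subsemigroup.closure (V : Set (OrderSing n)) ≤ LRAux.Msub n := by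
      rw [Subsemigroup.closure_le]
      intro v hv
      have hvV : v ∈ V := hv
      have hvM : v ∈ M := hVM hvV
      rw [hM, Finset.mem_sdiff] at hvM
      intro hQv
      exact hvM.2 (hWmem v hQv)
    have hwitQ : LRAux.Q (LRAux.gfun hn2 0 (n-1)) := LRAux.Q_wit hn2
    have hwitmem : LRAux.gfun hn2 0 (n-1) ∈ Subsemigroup.closure (V : Set (OrderSing n)) := by
      rw [hclos]
      trivial
    exact (hle hwitmem) hwitQ
end
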